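/- arXiv:math/0610385 — 3 statements merged into one kernel-verified Lean document; each statement's English description precedes it below -/
import Mathlib

section
/- Let (k_1, ..., k_m) be a partition of k with k+m ≤ n, and let p_1, ..., p_m be vertex-disjoint paths in K_n of lengths k_1, ..., k_m respectively (length = number of edges). Then the number of Hamiltonian cycles of K_n containing all edges of all the paths p_1, ..., p_m equals 2^{m-1} · (n-k-1)!. -/
def isHamCycle (n : ℕ) (H : Finset (Sym2 (Fin n))) : Prop :=
  ∃ σ : Equiv.Perm (Fin n), σ.IsCycle ∧ σ.support = Finset.univ ∧
    H = Finset.image (fun i => s(i, σ i)) Finset.univ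

/-- The edge set of a path with `m` edges given by its vertex sequence. -/
def pathEdges (n m : ℕ) (p : Fin (m + 1) → Fin n) : Finset (Sym2 (Fin n)) :=
  Finset.image (fun i : Fin m => s(p i.castSucc, p i.succ)) Finset.univ



open Equiv Equiv.Perm Finset

variable {α : Type*} [Fintype α] [DecidableEq α]

lemma insert_cycle {τ : Equiv.Perm α} (hτ : τ.IsCycle) {a b : α}
    (hb : b ∈ τ.support) (ha : a ∉ τ.support) :
    (Equiv.swap a b * τ).IsCycle ∧ (Equiv.swap a b * τ).support = insert a τ.support := by
  have hab : a ≠ b := fun h => ha (h ▸ hb)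
  have hτa : τ a = a := Equiv.Perm.notMem_support.1 ha
  set σ := Equiv.swap a b * τ with hσdef
  have happ : ∀ x, σ x = Equiv.swap a b (τ x) := fun x => rfl
  have hτxa : ∀ x, x ≠ a → τ x ≠ a := by
    intro x hx h
    have : x = a := τ.injective (by rw [h, hτa])
    exact hx this
  have hsupp : σ.support = insert a τ.support := by
    ext x
    simp only [Equiv.Perm.mem_support, Finset.mem_insert]
    by_cases hxa : x = a
    · subst hxa
      simp [happ, hτa, Equiv.swap_apply_left, hab.symm]
    · rw [happ]
      have h1 : τ x ≠ a := hτxa x hxa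
      by_cases hxs : x ∈ τ.support
      · constructor
        · intro _; right; exact Equiv.Perm.mem_support.1 hxs
        · intro _
          by_cases h2 : τ x = b
          · rw [h2, Equiv.swap_apply_right]; exact Ne.symm hxa
          · rw [Equiv.swap_apply_of_ne_of_ne h1 h2]
            exact Equiv.Perm.mem_support.1 hxs
      · have hτx : τ x = x := Equiv.Perm.notMem_support.1 hxs
        have hxb : x ≠ b := fun h => hxs (h ▸ hb)
        rw [hτx, Equiv.swap_apply_of_ne_of_ne hxa hxb]
        simp [hxa, hτx]
  have hσb : σ b ≠ b := by
    have h1 : τ b ≠ a := hτxa b hab.symm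
    have h2 : τ b ≠ b := Equiv.Perm.mem_support.1 hb
    rw [happ, Equiv.swap_apply_of_ne_of_ne h1 h2]
    exact h2
  have K : ∀ i : ℕ, σ.SameCycle b ((τ ^ i) b) := by
    intro i; induction i with
    | zero => simpa using Equiv.Perm.SameCycle.refl σ b
    | succ i IH =>
      have hz : (τ ^ i) b ∈ τ.support := Equiv.Perm.pow_apply_mem_support.2 hb
      set z := (τ ^ i) b with hzdef
      by_cases hzb : τ z = b
      · have h : (τ ^ (i + 1)) b = b := by rw [pow_succ', Equiv.Perm.mul_apply]; exact hzb
        rw [h]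
      · have hza : z ≠ a := fun h => ha (h ▸ hz)
        have h1 : τ z ≠ a := hτxa z hza
        have hσz : σ z = τ z := by rw [happ, Equiv.swap_apply_of_ne_of_ne h1 hzb]
        have h : (τ ^ (i + 1)) b = σ z := by rw [hσz, pow_succ', Equiv.Perm.mul_apply]
        rw [h]
        exact IH.trans ⟨1, by simp⟩
  have hKs : ∀ y ∈ τ.support, σ.SameCycle b y := by
    intro y hy
    obtain ⟨i, hi⟩ := hτ.exists_pow_eq (Equiv.Perm.mem_support.1 hb) (Equiv.Perm.mem_support.1 hy)
    exact hi ▸ K i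
  refine ⟨⟨b, hσb, ?_⟩, hsupp⟩
  intro y hy
  have hy' : y ∈ σ.support := Equiv.Perm.mem_support.2 hy
  rw [hsupp, Finset.mem_insert] at hy'
  rcases hy' with rfl | hy'
  · have hw : τ⁻¹ b ∈ τ.support := by
      have h := Equiv.Perm.apply_mem_support (f := τ⁻¹) (x := b)
      rw [Equiv.Perm.support_inv] at h
      exact h.2 hb
    have hσw : σ (τ⁻¹ b) = y := by
      rw [happ, Equiv.Perm.inv_def, Equiv.apply_symm_apply, Equiv.swap_apply_right]
    exact (hKs _ hw).trans ⟨1, by simpa using hσw⟩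
  · exact hKs y hy'

universe u

lemma nat_card_sigma {ι : Type u} [Fintype ι] (f : ι → Type*) [∀ i, Finite (f i)] :
    Nat.card ((i : ι) × f i) = ∑ i, Nat.card (f i) := by
  classical
  have : ∀ i, Fintype (f i) := fun i => Fintype.ofFinite _
  simp [Nat.card_eq_fintype_card, Fintype.card_sigma]

variable {α : Type*} [Fintype α] [DecidableEq α]


lemma count_cycles :
    ∀ s : Finset α, ∀ c : α → Option α, ∀ r : α → ℕ,
      (∀ x y, c x = some y → x ∈ s ∧ y ∈ s) →
      (∀ x y z, c x = some z → c y = some z → x = y) →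
      (∀ x y, c x = some y → r x < r y) →
      2 ≤ s.card →
      (Finset.univ.filter fun x => (c x).isSome).card < s.card →
      Nat.card {σ : Equiv.Perm α // σ.IsCycle ∧ σ.support = s ∧ ∀ x y, c x = some y → σ x = y}
        = Nat.factorial (s.card - (Finset.univ.filter fun x => (c x).isSome).card - 1) := by
  intro s
  induction s using Finset.strongInduction with
  | _ s IH =>
  intro c r hdom hinjc hr h2 hk
  rcases Nat.lt_or_ge s.card 3 with h3 | h3
  · -- base case : s.card = 2
    have hcard : s.card = 2 := by omega
    obtain ⟨a, b, hab, rfl⟩ := Finset.card_eq_two.1 hcard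
    have huniq : ∀ σ : Equiv.Perm α, σ.IsCycle → σ.support = {a, b} → σ = Equiv.swap a b := by
      intro σ hc hs
      apply Equiv.ext
      intro x
      by_cases hxa : x = a
      · subst hxa
        have hx : x ∈ σ.support := by rw [hs]; simp
        have h1 : σ x ∈ σ.support := Equiv.Perm.apply_mem_support.2 hx
        have h2' : σ x ≠ x := Equiv.Perm.mem_support.1 hx
        rw [hs, Finset.mem_insert, Finset.mem_singleton] at h1
        rcases h1 with h1 | h1
        · exact absurd h1 h2'
        · rw [h1, Equiv.swap_apply_left]
      · by_cases hxb : x = b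
        · subst hxb
          have hx : x ∈ σ.support := by rw [hs]; simp
          have h1 : σ x ∈ σ.support := Equiv.Perm.apply_mem_support.2 hx
          have h2' : σ x ≠ x := Equiv.Perm.mem_support.1 hx
          rw [hs, Finset.mem_insert, Finset.mem_singleton] at h1
          rcases h1 with h1 | h1
          · rw [h1, Equiv.swap_apply_right]
          · exact absurd h1 h2'
        · have hx : x ∉ σ.support := by rw [hs]; simp [hxa, hxb]
          rw [Equiv.Perm.notMem_support.1 hx, Equiv.swap_apply_of_ne_of_ne hxa hxb]
    have hone : Nat.card {σ : Equiv.Perm α // σ.IsCycle ∧ σ.support = {a, b} ∧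
        ∀ x y, c x = some y → σ x = y} = 1 := by
      rw [Nat.card_eq_one_iff_unique]
      constructor
      · constructor
        intro ⟨σ, hc1, hs1, _⟩ ⟨σ', hc1', hs1', _⟩
        exact Subtype.ext ((huniq σ hc1 hs1).trans (huniq σ' hc1' hs1').symm)
      · refine ⟨Equiv.swap a b, Equiv.Perm.isCycle_swap hab, Equiv.Perm.support_swap hab, ?_⟩
        intro x y h
        have hxy : x ≠ y := by
          intro he; subst he; exact lt_irrefl _ (hr x x h)
        obtain ⟨hx, hy⟩ := hdom x y h
        rw [Finset.mem_insert, Finset.mem_singleton] at hx hy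
        rcases hx with rfl | rfl
        · rcases hy with rfl | rfl
          · exact absurd rfl hxy
          · exact Equiv.swap_apply_left _ _
        · rcases hy with rfl | rfl
          · exact Equiv.swap_apply_right _ _
          · exact absurd rfl hxy
    rw [hone]
    have : ({a, b} : Finset α).card - (Finset.univ.filter fun x => (c x).isSome).card - 1 = 0 ∨
        ({a, b} : Finset α).card - (Finset.univ.filter fun x => (c x).isSome).card - 1 = 1 := by
      omega
    rcases this with h | h <;> rw [h] <;> rfl
  · -- s.card ≥ 3
    -- the contraction step
    have step : ∀ (c : α → Option α) (r : α → ℕ),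
        (∀ x y, c x = some y → x ∈ s ∧ y ∈ s) →
        (∀ x y z, c x = some z → c y = some z → x = y) →
        (∀ x y, c x = some y → r x < r y) →
        (Finset.univ.filter fun x => (c x).isSome).card < s.card →
        ∀ a b, c a = some b →
        Nat.card {σ : Equiv.Perm α // σ.IsCycle ∧ σ.support = s ∧ ∀ x y, c x = some y → σ x = y}
          = Nat.factorial (s.card - (Finset.univ.filter fun x => (c x).isSome).card - 1) := by
      intro c r hdom hinjc hr hk a b hab
      have hras : r a < r b := hr a b hab
      have hba : b ≠ a := by intro h; subst h; exact lt_irrefl _ hras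
      obtain ⟨has, hbs⟩ := hdom a b hab
      set c' : α → Option α := fun x => if x = a then none else if c x = some a then some b else c x
        with hc'def
      have hc'a : ∀ y, c' a ≠ some y := by intro y; simp [hc'def]
      have hc'eq : ∀ x y, c' x = some y ↔
          (x ≠ a ∧ ((c x = some a ∧ y = b) ∨ (c x = some y ∧ y ≠ a))) := by
        intro x y
        constructor
        · intro h
          simp only [hc'def] at h
          split_ifs at h with h1 h2
          · exact ⟨h1, Or.inl ⟨h2, (Option.some.inj h).symm⟩⟩
          · refine ⟨h1, Or.inr ⟨h, ?_⟩⟩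
            intro he; subst he; exact h2 h
        · rintro ⟨h1, (⟨hca, hyb⟩ | ⟨hcy, hya⟩)⟩
          · rw [hyb]; simp [hc'def, h1, hca]
          · have hne : ¬ (c x = some a) := by
              intro he
              exact hya (Option.some.inj (hcy.symm.trans he))
            simp [hc'def, h1, hne, hcy, hya]
      -- filter identity
      have hfilt : (Finset.univ.filter fun x => ((c') x).isSome) =
          (Finset.univ.filter fun x => (c x).isSome).erase a := by
        ext x
        simp only [Finset.mem_filter, Finset.mem_erase, Finset.mem_univ, true_and]
        by_cases hxa : x = a
        · subst hxa; simp [hc'def]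
        · simp only [hc'def, if_neg hxa]
          by_cases hca : c x = some a
          · simp [hca, hxa]
          · simp [hca, hxa]
      have hamem : a ∈ (Finset.univ.filter fun x => (c x).isSome) := by
        simp [hab]
      have hkc' : (Finset.univ.filter fun x => ((c') x).isSome).card =
          (Finset.univ.filter fun x => (c x).isSome).card - 1 := by
        rw [hfilt, Finset.card_erase_of_mem hamem]
      have hkpos : 0 < (Finset.univ.filter fun x => (c x).isSome).card :=
        Finset.card_pos.2 ⟨a, hamem⟩
      -- hypotheses for the smaller instance
      have hss : s.erase a ⊂ s := Finset.erase_ssubset has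
      have hdom' : ∀ x y, c' x = some y → x ∈ s.erase a ∧ y ∈ s.erase a := by
        intro x y h
        rw [hc'eq] at h
        obtain ⟨h1, h2⟩ := h
        rcases h2 with ⟨hca, hyb⟩ | ⟨hcy, hya⟩
        · rw [hyb]
          exact ⟨Finset.mem_erase.2 ⟨h1, (hdom x a hca).1⟩, Finset.mem_erase.2 ⟨hba, hbs⟩⟩
        · exact ⟨Finset.mem_erase.2 ⟨h1, (hdom x y hcy).1⟩,
            Finset.mem_erase.2 ⟨hya, (hdom x y hcy).2⟩⟩
      have hinjc' : ∀ x y z, c' x = some z → c' y = some z → x = y := by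
        intro x y z hx hy
        rw [hc'eq] at hx hy
        obtain ⟨hx1, hx2⟩ := hx
        obtain ⟨hy1, hy2⟩ := hy
        rcases hx2 with ⟨hxa, hxb⟩ | ⟨hxz, hxza⟩
        · rcases hy2 with ⟨hya, _⟩ | ⟨hyz, hyza⟩
          · exact hinjc x y a hxa hya
          · rw [hxb] at hyz
            exact absurd (hinjc y a b hyz hab) hy1
        · rcases hy2 with ⟨hya, hyb⟩ | ⟨hyz, hyza⟩
          · rw [hyb] at hxz
            exact absurd (hinjc x a b hxz hab) hx1
          · exact hinjc x y z hxz hyz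
      have hr' : ∀ x y, c' x = some y → r x < r y := by
        intro x y h
        rw [hc'eq] at h
        obtain ⟨h1, h2⟩ := h
        rcases h2 with ⟨hca, hyb⟩ | ⟨hcy, _⟩
        · rw [hyb]
          exact (hr x a hca).trans hras
        · exact hr x y hcy
      have hcard' : (s.erase a).card = s.card - 1 := Finset.card_erase_of_mem has
      have h2' : 2 ≤ (s.erase a).card := by omega
      have hk' : (Finset.univ.filter fun x => ((c') x).isSome).card < (s.erase a).card := by
        rw [hkc', hcard']; omega
      have IHval := IH (s.erase a) hss c' r hdom' hinjc' hr' h2' hk'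
      -- the bijection
      have hbij : Nat.card {σ : Equiv.Perm α // σ.IsCycle ∧ σ.support = s ∧
            ∀ x y, c x = some y → σ x = y} =
          Nat.card {σ : Equiv.Perm α // σ.IsCycle ∧ σ.support = s.erase a ∧
            ∀ x y, c' x = some y → σ x = y} := by
        apply Nat.card_congr
        refine ⟨fun σ => ⟨Equiv.swap a b * σ.1, ?_⟩, fun τ => ⟨Equiv.swap a b * τ.1, ?_⟩, ?_, ?_⟩
        · obtain ⟨σ, hcyc, hsup, hcon⟩ := σ
          have hσa : σ a = b := hcon a b hab
          have haa : σ a ≠ a := by rw [hσa]; exact hba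
          have hffa : σ (σ a) ≠ a := by
            intro h
            have heq := hcyc.eq_swap_of_apply_apply_eq_self haa h
            have : s.card ≤ 2 := by
              rw [← hsup, heq, Equiv.Perm.support_swap (fun he => haa he.symm)]
              exact (Finset.card_insert_le _ _).trans (by simp)
            omega
          have hic := hcyc.swap_mul haa hffa
          have hsup2 := Equiv.Perm.support_swap_mul_eq σ a hffa
          rw [hσa] at hic hsup2
          refine ⟨hic, ?_, ?_⟩
          · rw [hsup2, hsup, ← Finset.erase_eq]
          · intro x y h
            rw [hc'eq] at h
            obtain ⟨h1, h2⟩ := h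
            rcases h2 with ⟨hca, hyb⟩ | ⟨hcy, hya⟩
            · have hσx : σ x = a := hcon x a hca
              rw [hyb, Equiv.Perm.mul_apply, hσx, Equiv.swap_apply_left]
            · have hyb : y ≠ b := by
                intro he; rw [he] at hcy
                exact h1 (hinjc x a b hcy hab)
              have hσx : σ x = y := hcon x y hcy
              rw [Equiv.Perm.mul_apply, hσx, Equiv.swap_apply_of_ne_of_ne hya hyb]
        · obtain ⟨τ, hcyc, hsup, hcon⟩ := τ
          have hbmem : b ∈ τ.support := by rw [hsup]; exact Finset.mem_erase.2 ⟨hba, hbs⟩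
          have hamem' : a ∉ τ.support := by rw [hsup]; exact Finset.notMem_erase a s
          obtain ⟨hic, hsup2⟩ := insert_cycle hcyc hbmem hamem'
          refine ⟨hic, ?_, ?_⟩
          · rw [hsup2, hsup, Finset.insert_erase has]
          · intro x y h
            by_cases hxa : x = a
            · rw [hxa] at h
              have hyb : y = b := (Option.some.inj (hab.symm.trans h)).symm
              have hτa : τ a = a := Equiv.Perm.notMem_support.1 hamem'
              rw [hxa, hyb, Equiv.Perm.mul_apply, hτa, Equiv.swap_apply_left]
            · by_cases hca : c x = some a
              · have hya : y = a := (Option.some.inj (hca.symm.trans h)).symm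
                have hτx : τ x = b := hcon x b (by rw [hc'eq]; exact ⟨hxa, Or.inl ⟨hca, rfl⟩⟩)
                rw [hya, Equiv.Perm.mul_apply, hτx, Equiv.swap_apply_right]
              · have hya : y ≠ a := by
                  intro he; rw [he] at h; exact hca h
                have hτx : τ x = y := hcon x y (by rw [hc'eq]; exact ⟨hxa, Or.inr ⟨h, hya⟩⟩)
                have hyb : y ≠ b := by
                  intro he; rw [he] at h
                  exact hxa (hinjc x a b h hab)
                rw [Equiv.Perm.mul_apply, hτx, Equiv.swap_apply_of_ne_of_ne hya hyb]
        · intro σ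
          apply Subtype.ext
          show Equiv.swap a b * (Equiv.swap a b * σ.1) = σ.1
          rw [← mul_assoc, Equiv.swap_mul_self, one_mul]
        · intro τ
          apply Subtype.ext
          show Equiv.swap a b * (Equiv.swap a b * τ.1) = τ.1
          rw [← mul_assoc, Equiv.swap_mul_self, one_mul]
      rw [hbij, IHval, hkc', hcard']
      congr 1
      omega
    -- now the two cases
    by_cases hex : ∃ a b, c a = some b
    · obtain ⟨a, b, hab⟩ := hex
      exact step c r hdom hinjc hr hk a b hab
    · -- no constraints at all
      push_neg at hex
      have hc0 : ∀ x, c x = none := by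
        intro x
        cases hcx : c x with
        | none => rfl
        | some y => exact absurd hcx (hex x y)
      have hkval : (Finset.univ.filter fun x => (c x).isSome).card = 0 := by
        rw [Finset.card_eq_zero]
        ext x
        simp [hc0 x]
      obtain ⟨a, has⟩ : s.Nonempty := Finset.card_pos.1 (by omega)
      -- sigma decomposition over the image of a
      have hsig : Nat.card {σ : Equiv.Perm α // σ.IsCycle ∧ σ.support = s ∧
            ∀ x y, c x = some y → σ x = y} =
          Nat.card ((b : {b // b ∈ s.erase a}) ×
            {σ : Equiv.Perm α // σ.IsCycle ∧ σ.support = s ∧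
              ∀ x y, (if x = a then some b.1 else none) = some y → σ x = y}) := by
        apply Nat.card_congr
        refine ⟨fun σ => ⟨⟨σ.1 a, ?_⟩, σ.1, σ.2.1, σ.2.2.1, ?_⟩,
                fun z => ⟨z.2.1, z.2.2.1, z.2.2.2.1, ?_⟩, ?_, ?_⟩
        · have hasup : a ∈ σ.1.support := by rw [σ.2.2.1]; exact has
          refine Finset.mem_erase.2 ⟨Equiv.Perm.mem_support.1 hasup, ?_⟩
          have h := Equiv.Perm.apply_mem_support.2 hasup
          rwa [σ.2.2.1] at h
        · intro x y h
          by_cases h1 : x = a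
          · rw [if_pos h1] at h
            rw [h1]
            exact Option.some.inj h
          · rw [if_neg h1] at h
            cases h
        · intro x y h
          rw [hc0 x] at h
          cases h
        · intro σ
          apply Subtype.ext
          rfl
        · rintro ⟨⟨b, hb⟩, σ, hσ1, hσ2, hσ3⟩
          have hba : σ a = b := hσ3 a b (if_pos rfl)
          subst hba
          rfl
      rw [hsig, nat_card_sigma]
      have hfib : ∀ b : {b // b ∈ s.erase a},
          Nat.card {σ : Equiv.Perm α // σ.IsCycle ∧ σ.support = s ∧
            ∀ x y, (if x = a then some b.1 else none) = some y → σ x = y} =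
          Nat.factorial (s.card - 2) := by
        intro b
        have hbae : b.1 ∈ s.erase a := b.2
        rw [Finset.mem_erase] at hbae
        have hfone : (Finset.univ.filter fun x =>
            ((fun x => if x = a then some b.1 else none) x).isSome).card = 1 := by
          have heq : (Finset.univ.filter fun x =>
              ((fun x => if x = a then some b.1 else none) x).isSome) = {a} := by
            ext x
            by_cases hxa : x = a <;> simp [hxa]
          rw [heq, Finset.card_singleton]
        have hstep := step (fun x => if x = a then some b.1 else none)
          (fun x => if x = a then 0 else 1) ?_ ?_ ?_ ?_ a b.1 (if_pos rfl)
        · rw [hstep, hfone]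
          congr 1
        · intro x y h
          replace h : (if x = a then some b.1 else none) = some y := h
          by_cases h1 : x = a
          · rw [if_pos h1] at h
            rw [h1, ← Option.some.inj h]
            exact ⟨has, hbae.2⟩
          · rw [if_neg h1] at h
            cases h
        · intro x y z hx hy
          replace hx : (if x = a then some b.1 else none) = some z := hx
          replace hy : (if y = a then some b.1 else none) = some z := hy
          by_cases h1 : x = a
          · by_cases h2 : y = a
            · rw [h1, h2]
            · rw [if_neg h2] at hy; cases hy
          · rw [if_neg h1] at hx; cases hx
        · intro x y h
          replace h : (if x = a then some b.1 else none) = some y := h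
          by_cases h1 : x = a
          · rw [if_pos h1] at h
            have hyb : y = b.1 := Option.some.inj h.symm
            show (if x = a then (0:ℕ) else 1) < (if y = a then (0:ℕ) else 1)
            rw [if_pos h1, if_neg (by rw [hyb]; exact hbae.1)]
            omega
          · rw [if_neg h1] at h
            cases h
        · rw [hfone]
          omega
      rw [Finset.sum_congr rfl (fun b _ => hfib b)]
      rw [Finset.sum_const, smul_eq_mul]
      have hcard3 : Fintype.card {b // b ∈ s.erase a} = s.card - 1 := by
        rw [Fintype.card_coe, Finset.card_erase_of_mem has]
      rw [Finset.card_univ, hcard3, hkval]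
      obtain ⟨t, ht⟩ : ∃ t, s.card = t + 3 := ⟨s.card - 3, by omega⟩
      rw [ht]
      show (t + 2) * Nat.factorial (t + 1) = Nat.factorial (t + 2)
      rfl



def psrc {n m : ℕ} (ks : Fin m → ℕ) (p : ∀ j : Fin m, Fin (ks j + 1) → Fin n)
    (ε : Fin m → Bool) (z : (j : Fin m) × Fin (ks j)) : Fin n :=
  if ε z.1 then p z.1 z.2.castSucc else p z.1 z.2.succ

def ptgt {n m : ℕ} (ks : Fin m → ℕ) (p : ∀ j : Fin m, Fin (ks j + 1) → Fin n)
    (ε : Fin m → Bool) (z : (j : Fin m) × Fin (ks j)) : Fin n :=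
  if ε z.1 then p z.1 z.2.succ else p z.1 z.2.castSucc

noncomputable def cfun {n m : ℕ} (ks : Fin m → ℕ) (p : ∀ j : Fin m, Fin (ks j + 1) → Fin n)
    (ε : Fin m → Bool) (x : Fin n) : Option (Fin n) :=
  if h : ∃ z, psrc ks p ε z = x then some (ptgt ks p ε h.choose) else none

noncomputable def rkf {n m : ℕ} (ks : Fin m → ℕ) (p : ∀ j : Fin m, Fin (ks j + 1) → Fin n)
    (ε : Fin m → Bool) (x : Fin n) : ℕ :=
  if h : ∃ w : (j : Fin m) × Fin (ks j + 1), p w.1 w.2 = x then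
    (if ε h.choose.1 then (h.choose.2 : ℕ) else ks h.choose.1 - (h.choose.2 : ℕ))
  else 0

section PathLemmas

variable {n m : ℕ} {ks : Fin m → ℕ} (p : ∀ j : Fin m, Fin (ks j + 1) → Fin n)

lemma rep_unique (hinj : ∀ j, Function.Injective (p j))
    (hdisj : ∀ j j', j ≠ j' → ∀ a b, p j a ≠ p j' b)
    {w w' : (j : Fin m) × Fin (ks j + 1)} (h : p w.1 w.2 = p w'.1 w'.2) :
    w = w' := by
  obtain ⟨j, i⟩ := w
  obtain ⟨j', i'⟩ := w'
  have hj : j = j' := by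
    by_contra hne
    exact hdisj j j' hne i i' h
  subst hj
  have hi : i = i' := hinj j h
  rw [hi]



lemma psrc_inj (hinj : ∀ j, Function.Injective (p j))
    (hdisj : ∀ j j', j ≠ j' → ∀ a b, p j a ≠ p j' b)
    (ε : Fin m → Bool) : Function.Injective (psrc ks p ε) := by
  rintro ⟨j, i⟩ ⟨j', i'⟩ h
  unfold psrc at h
  dsimp only at h
  by_cases h1 : ε j = true
  · by_cases h2 : ε j' = true
    · rw [if_pos h1, if_pos h2] at h
      have hs := rep_unique p hinj hdisj
        (w := ⟨j, Fin.castSucc i⟩) (w' := ⟨j', Fin.castSucc i'⟩) h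
      injection hs with hj hi
      subst hj
      have hii : i = i' := Fin.castSucc_inj.1 (eq_of_heq hi)
      rw [hii]
    · rw [if_pos h1, if_neg h2] at h
      have hs := rep_unique p hinj hdisj
        (w := ⟨j, Fin.castSucc i⟩) (w' := ⟨j', Fin.succ i'⟩) h
      injection hs with hj hi
      subst hj
      exact absurd h1 h2
  · by_cases h2 : ε j' = true
    · rw [if_neg h1, if_pos h2] at h
      have hs := rep_unique p hinj hdisj
        (w := ⟨j, Fin.succ i⟩) (w' := ⟨j', Fin.castSucc i'⟩) h
      injection hs with hj hi
      subst hj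
      exact absurd h2 h1
    · rw [if_neg h1, if_neg h2] at h
      have hs := rep_unique p hinj hdisj
        (w := ⟨j, Fin.succ i⟩) (w' := ⟨j', Fin.succ i'⟩) h
      injection hs with hj hi
      subst hj
      have hii : i = i' := Fin.succ_inj.1 (eq_of_heq hi)
      rw [hii]

lemma ptgt_inj (hinj : ∀ j, Function.Injective (p j))
    (hdisj : ∀ j j', j ≠ j' → ∀ a b, p j a ≠ p j' b)
    (ε : Fin m → Bool) : Function.Injective (ptgt ks p ε) := by
  rintro ⟨j, i⟩ ⟨j', i'⟩ h
  unfold ptgt at h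
  dsimp only at h
  by_cases h1 : ε j = true
  · by_cases h2 : ε j' = true
    · rw [if_pos h1, if_pos h2] at h
      have hs := rep_unique p hinj hdisj
        (w := ⟨j, Fin.succ i⟩) (w' := ⟨j', Fin.succ i'⟩) h
      injection hs with hj hi
      subst hj
      have hii : i = i' := Fin.succ_inj.1 (eq_of_heq hi)
      rw [hii]
    · rw [if_pos h1, if_neg h2] at h
      have hs := rep_unique p hinj hdisj
        (w := ⟨j, Fin.succ i⟩) (w' := ⟨j', Fin.castSucc i'⟩) h
      injection hs with hj hi
      subst hj
      exact absurd h1 h2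
  · by_cases h2 : ε j' = true
    · rw [if_neg h1, if_pos h2] at h
      have hs := rep_unique p hinj hdisj
        (w := ⟨j, Fin.castSucc i⟩) (w' := ⟨j', Fin.succ i'⟩) h
      injection hs with hj hi
      subst hj
      exact absurd h2 h1
    · rw [if_neg h1, if_neg h2] at h
      have hs := rep_unique p hinj hdisj
        (w := ⟨j, Fin.castSucc i⟩) (w' := ⟨j', Fin.castSucc i'⟩) h
      injection hs with hj hi
      subst hj
      have hii : i = i' := Fin.castSucc_inj.1 (eq_of_heq hi)
      rw [hii]

lemma cfun_some_iff (hinj : ∀ j, Function.Injective (p j))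
    (hdisj : ∀ j j', j ≠ j' → ∀ a b, p j a ≠ p j' b) (ε : Fin m → Bool) (x y : Fin n) :
    cfun ks p ε x = some y ↔ ∃ z, psrc ks p ε z = x ∧ ptgt ks p ε z = y := by
  unfold cfun
  by_cases h : ∃ z, psrc ks p ε z = x
  · rw [dif_pos h]
    constructor
    · intro he
      exact ⟨h.choose, h.choose_spec, Option.some.inj he⟩
    · rintro ⟨z, hz1, hz2⟩
      have hzz : h.choose = z := psrc_inj p hinj hdisj ε (h.choose_spec.trans hz1.symm)
      rw [hzz, hz2]
  · rw [dif_neg h]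
    constructor
    · intro he; cases he
    · rintro ⟨z, hz1, _⟩
      exact absurd ⟨z, hz1⟩ h

lemma rkf_apply (hinj : ∀ j, Function.Injective (p j))
    (hdisj : ∀ j j', j ≠ j' → ∀ a b, p j a ≠ p j' b)
    (ε : Fin m → Bool) (w : (j : Fin m) × Fin (ks j + 1)) :
    rkf ks p ε (p w.1 w.2) = if ε w.1 then (w.2 : ℕ) else ks w.1 - (w.2 : ℕ) := by
  unfold rkf
  have h : ∃ w' : (j : Fin m) × Fin (ks j + 1), p w'.1 w'.2 = p w.1 w.2 := ⟨w, rfl⟩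
  rw [dif_pos h]
  have hzz : h.choose = w := rep_unique p hinj hdisj h.choose_spec
  rw [hzz]

end PathLemmas

lemma fwd_prop {n l : ℕ} (hl : 1 ≤ l) (σ : Equiv.Perm (Fin n)) (q : Fin (l + 1) → Fin n)
    (hq : Function.Injective q)
    (hFB : ∀ i : Fin l, σ (q i.castSucc) = q i.succ ∨ σ (q i.succ) = q i.castSucc)
    (h0 : σ (q (Fin.castSucc ⟨0, hl⟩)) = q (Fin.succ ⟨0, hl⟩)) :
    ∀ i : Fin l, σ (q i.castSucc) = q i.succ := by
  have H : ∀ t (h : t < l), σ (q (Fin.castSucc ⟨t, h⟩)) = q (Fin.succ ⟨t, h⟩) := by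
    intro t
    induction t with
    | zero => intro h; exact h0
    | succ t IHt =>
      intro h
      have ht : t < l := Nat.lt_of_succ_lt h
      have hprev := IHt ht
      rcases hFB ⟨t + 1, h⟩ with hF | hB
      · exact hF
      · exfalso
        have hcs : (Fin.castSucc (⟨t + 1, h⟩ : Fin l)) = Fin.succ (⟨t, ht⟩ : Fin l) := by
          apply Fin.ext; simp
        rw [hcs] at hB
        have heq := σ.injective (hB.trans hprev.symm)
        have h2 := hq heq
        have h3 := congrArg Fin.val h2
        simp [Fin.val_succ] at h3
        omega
  intro i
  exact H i.1 i.2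

lemma bwd_prop {n l : ℕ} (hl : 1 ≤ l) (σ : Equiv.Perm (Fin n)) (q : Fin (l + 1) → Fin n)
    (hq : Function.Injective q)
    (hFB : ∀ i : Fin l, σ (q i.castSucc) = q i.succ ∨ σ (q i.succ) = q i.castSucc)
    (h0 : ¬ σ (q (Fin.castSucc ⟨0, hl⟩)) = q (Fin.succ ⟨0, hl⟩)) :
    ∀ i : Fin l, σ (q i.succ) = q i.castSucc := by
  have H : ∀ t (h : t < l), σ (q (Fin.succ ⟨t, h⟩)) = q (Fin.castSucc ⟨t, h⟩) := by
    intro t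
    induction t with
    | zero =>
      intro h
      exact (hFB ⟨0, h⟩).resolve_left h0
    | succ t IHt =>
      intro h
      have ht : t < l := Nat.lt_of_succ_lt h
      have hprev := IHt ht
      rcases hFB ⟨t + 1, h⟩ with hF | hB
      · exfalso
        have hcs : (Fin.castSucc (⟨t + 1, h⟩ : Fin l)) = Fin.succ (⟨t, ht⟩ : Fin l) := by
          apply Fin.ext; simp
        rw [hcs] at hF
        have heq : q (Fin.succ (⟨t + 1, h⟩ : Fin l)) = q (Fin.castSucc (⟨t, ht⟩ : Fin l)) :=
          hF.symm.trans hprev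
        have h2 := hq heq
        have h3 := congrArg Fin.val h2
        simp [Fin.val_succ] at h3
        omega
      · exact hB
  intro i
  exact H i.1 i.2

theorem ham_cycles_through_disjoint_paths (n k m : ℕ) (hm : 1 ≤ m)
    (ks : Fin m → ℕ) (hks : ∀ j, 1 ≤ ks j) (hsum : ∑ j, ks j = k)
    (hkm : k + m ≤ n)
    (p : ∀ j : Fin m, Fin (ks j + 1) → Fin n)
    (hinj : ∀ j, Function.Injective (p j))
    (hdisj : ∀ j j', j ≠ j' → ∀ a b, p j a ≠ p j' b) :
    Nat.card {H : Finset (Sym2 (Fin n)) //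
        isHamCycle n H ∧ ∀ j, pathEdges n (ks j) (p j) ⊆ H} =
      2 ^ (m - 1) * Nat.factorial (n - k - 1) := by
  classical
  have hmk : m ≤ k := by
    rw [← hsum]
    calc m = ∑ _j : Fin m, 1 := by simp
    _ ≤ ∑ j, ks j := Finset.sum_le_sum fun j _ => hks j
  have hn2 : 2 ≤ n := by omega
  have hkn : k < n := by omega
  set j₀ : Fin m := ⟨0, hm⟩ with hj₀def
  -- counting each fiber
  have hfib : ∀ ε : Fin m → Bool,
      Nat.card {σ : Equiv.Perm (Fin n) // σ.IsCycle ∧ σ.support = Finset.univ ∧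
        ∀ x y, cfun ks p ε x = some y → σ x = y} = Nat.factorial (n - k - 1) := by
    intro ε
    have hfc : (Finset.univ.filter fun x => ((cfun ks p ε) x).isSome).card = k := by
      have himg : (Finset.univ.filter fun x => ((cfun ks p ε) x).isSome)
          = Finset.image (psrc ks p ε) Finset.univ := by
        ext x
        simp only [Finset.mem_filter, Finset.mem_univ, true_and, Finset.mem_image]
        constructor
        · intro hx
          by_cases h : ∃ z, psrc ks p ε z = x
          · obtain ⟨z, hz⟩ := h
            exact ⟨z, hz⟩
          · unfold cfun at hx
            rw [dif_neg h] at hx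
            cases hx
        · rintro ⟨z, hz⟩
          unfold cfun
          rw [dif_pos ⟨z, hz⟩]
          rfl
      rw [himg, Finset.card_image_of_injective _ (psrc_inj p hinj hdisj ε),
        Finset.card_univ, Fintype.card_sigma]
      simpa using hsum
    have hinjc2 : ∀ x y z, cfun ks p ε x = some z → cfun ks p ε y = some z → x = y := by
      intro x y z hx hy
      obtain ⟨w, hw1, hw2⟩ := (cfun_some_iff p hinj hdisj ε x z).1 hx
      obtain ⟨w', hw1', hw2'⟩ := (cfun_some_iff p hinj hdisj ε y z).1 hy
      have hww : w = w' := ptgt_inj p hinj hdisj ε (hw2.trans hw2'.symm)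
      rw [← hw1, ← hw1', hww]
    have hr2 : ∀ x y, cfun ks p ε x = some y → rkf ks p ε x < rkf ks p ε y := by
      intro x y hxy
      obtain ⟨⟨j, i⟩, h1, h2⟩ := (cfun_some_iff p hinj hdisj ε x y).1 hxy
      rw [← h1, ← h2]
      by_cases hej : ε j = true
      · simp only [psrc, ptgt, hej, if_true]
        rw [rkf_apply p hinj hdisj ε ⟨j, Fin.castSucc i⟩,
          rkf_apply p hinj hdisj ε ⟨j, Fin.succ i⟩]
        simp only [hej, if_true, Fin.coe_castSucc, Fin.val_succ]
        omega
      · have hejf : ε j = false := by simpa using hej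
        simp only [psrc, ptgt, hejf, if_false, Bool.false_eq_true]
        rw [rkf_apply p hinj hdisj ε ⟨j, Fin.succ i⟩,
          rkf_apply p hinj hdisj ε ⟨j, Fin.castSucc i⟩]
        have hlt := i.isLt
        simp only [hejf, if_false, Bool.false_eq_true, Fin.coe_castSucc, Fin.val_succ]
        omega
    have h22 : 2 ≤ (Finset.univ : Finset (Fin n)).card := by
      rw [Finset.card_univ, Fintype.card_fin]
      omega
    have hk2 : (Finset.univ.filter fun x => ((cfun ks p ε) x).isSome).card
        < (Finset.univ : Finset (Fin n)).card := by
      rw [hfc, Finset.card_univ, Fintype.card_fin]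
      omega
    rw [count_cycles (Finset.univ : Finset (Fin n)) (cfun ks p ε) (rkf ks p ε)
      (fun x y _ => ⟨Finset.mem_univ x, Finset.mem_univ y⟩) hinjc2 hr2 h22 hk2,
      hfc, Finset.card_univ, Fintype.card_fin]
  -- edge membership in the edge set of a permutation
  have Emem : ∀ (σ : Equiv.Perm (Fin n)) (x y : Fin n),
      (s(x, y) ∈ Finset.image (fun i => s(i, σ i)) Finset.univ) ↔ (σ x = y ∨ σ y = x) := by
    intro σ x y
    simp only [Finset.mem_image, Finset.mem_univ, true_and]
    constructor
    · rintro ⟨i, hi⟩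
      rw [Sym2.eq_iff] at hi
      rcases hi with ⟨h1, h2⟩ | ⟨h1, h2⟩
      · exact Or.inl (h1 ▸ h2)
      · exact Or.inr (h1 ▸ h2)
    · rintro (h | h)
      · exact ⟨x, by rw [h]⟩
      · exact ⟨y, by rw [h, Sym2.eq_swap]⟩
  -- path subset characterization
  have Psub : ∀ (j : Fin m) (H : Finset (Sym2 (Fin n))),
      pathEdges n (ks j) (p j) ⊆ H ↔
        ∀ i : Fin (ks j), s(p j i.castSucc, p j i.succ) ∈ H := by
    intro j H
    constructor
    · intro h i
      exact h (Finset.mem_image_of_mem _ (Finset.mem_univ i))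
    · intro h e he
      obtain ⟨i, _, rfl⟩ := Finset.mem_image.1 he
      exact h i
  -- a 2-step return forces n = 2
  have no2 : ∀ σ : Equiv.Perm (Fin n), σ.IsCycle → σ.support = Finset.univ →
      ∀ u, σ (σ u) = u → n = 2 := by
    intro σ hc hs u h
    have hu : σ u ≠ u := by
      have : u ∈ σ.support := by rw [hs]; exact Finset.mem_univ u
      exact Equiv.Perm.mem_support.1 this
    have heq := hc.eq_swap_of_apply_apply_eq_self hu h
    have hle : (Finset.univ : Finset (Fin n)).card ≤ 2 := by
      rw [← hs, heq, Equiv.Perm.support_swap (fun he => hu he.symm)]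
      exact (Finset.card_insert_le _ _).trans (by simp)
    rw [Finset.card_univ, Fintype.card_fin] at hle
    omega
  -- uniqueness of the cycle from its edge set plus one directed edge
  have uniq : ∀ σ σ' : Equiv.Perm (Fin n), σ.IsCycle → σ.support = Finset.univ →
      σ'.IsCycle → σ'.support = Finset.univ →
      Finset.image (fun i => s(i, σ i)) Finset.univ
        = Finset.image (fun i => s(i, σ' i)) Finset.univ →
      ∀ v₀ : Fin n, σ' v₀ = σ v₀ → σ' = σ := by
    intro σ σ' hc hs hc' hs' himg v₀ hv
    by_cases hn3 : 3 ≤ n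
    · have hnsupp : ∀ (τ : Equiv.Perm (Fin n)), τ.support = Finset.univ → ∀ u, τ u ≠ u := by
        intro τ hsup u
        apply Equiv.Perm.mem_support.1
        rw [hsup]
        exact Finset.mem_univ u
      have hno2 : ∀ (τ : Equiv.Perm (Fin n)), τ.IsCycle → τ.support = Finset.univ →
          ∀ u, τ (τ u) ≠ u := by
        intro τ hc0 hs0 u h
        have := no2 τ hc0 hs0 u h
        omega
      have hpt : ∀ u, σ' u = σ u ∨ σ' u = σ⁻¹ u := by
        intro u
        have hm1 : s(u, σ' u) ∈ Finset.image (fun i => s(i, σ' i)) Finset.univ :=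
          (Emem σ' u (σ' u)).2 (Or.inl rfl)
        rw [← himg] at hm1
        rcases (Emem σ u (σ' u)).1 hm1 with h | h
        · exact Or.inl h.symm
        · right
          apply σ.injective
          rw [Equiv.Perm.inv_def, Equiv.apply_symm_apply]
          exact h
      have claim : ∀ i : ℕ, (σ' ^ i) v₀ = (σ ^ i) v₀ ∧ (σ' ^ (i + 1)) v₀ = (σ ^ (i + 1)) v₀ := by
        intro i
        induction i with
        | zero =>
          refine ⟨rfl, ?_⟩
          simpa using hv
        | succ i IH =>
          refine ⟨IH.2, ?_⟩
          rcases hpt ((σ ^ (i + 1)) v₀) with h | h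
          · have h5 : (σ' ^ (i + 1 + 1)) v₀ = σ' ((σ' ^ (i + 1)) v₀) := by
              rw [pow_succ', Equiv.Perm.mul_apply]
            have h6 : (σ ^ (i + 1 + 1)) v₀ = σ ((σ ^ (i + 1)) v₀) := by
              rw [pow_succ', Equiv.Perm.mul_apply]
            rw [h5, IH.2, h, h6]
          · exfalso
            have h1 : σ⁻¹ ((σ ^ (i + 1)) v₀) = (σ ^ i) v₀ := by
              rw [pow_succ', Equiv.Perm.mul_apply, Equiv.Perm.inv_def, Equiv.symm_apply_apply]
            apply hno2 σ' hc' hs' ((σ' ^ i) v₀)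
            have h3 : σ' ((σ' ^ i) v₀) = (σ' ^ (i + 1)) v₀ := by
              rw [pow_succ', Equiv.Perm.mul_apply]
            rw [h3, IH.2, h, h1, ← IH.1]
      apply Equiv.ext
      intro x
      have hx : σ x ≠ x := hnsupp σ hs x
      have hv0 : σ v₀ ≠ v₀ := hnsupp σ hs v₀
      obtain ⟨i, hi⟩ := hc.exists_pow_eq hv0 hx
      calc σ' x = σ' ((σ' ^ i) v₀) := by rw [(claim i).1, hi]
      _ = (σ' ^ (i + 1)) v₀ := by rw [pow_succ', Equiv.Perm.mul_apply]
      _ = (σ ^ (i + 1)) v₀ := (claim i).2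
      _ = σ ((σ ^ i) v₀) := by rw [pow_succ', Equiv.Perm.mul_apply]
      _ = σ x := by rw [hi]
    · have hn2' : n = 2 := by omega
      subst hn2'
      have hfin : ∀ (x a b : Fin 2), a ≠ x → b ≠ x → a = b := by decide
      apply Equiv.ext
      intro x
      have h1 : σ' x ≠ x := Equiv.Perm.mem_support.1 (by rw [hs']; exact Finset.mem_univ x)
      have h2 : σ x ≠ x := Equiv.Perm.mem_support.1 (by rw [hs]; exact Finset.mem_univ x)
      exact hfin x (σ' x) (σ x) h1 h2
  -- equivalence between constraint systems and directed path conditions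
  have hconst : ∀ (ε : Fin m → Bool) (σ : Equiv.Perm (Fin n)),
      (∀ x y, cfun ks p ε x = some y → σ x = y) ↔
      (∀ z : (j : Fin m) × Fin (ks j), σ (psrc ks p ε z) = ptgt ks p ε z) := by
    intro ε σ
    constructor
    · intro h z
      exact h _ _ ((cfun_some_iff p hinj hdisj ε _ _).2 ⟨z, rfl, rfl⟩)
    · intro h x y hxy
      obtain ⟨z, hz1, hz2⟩ := (cfun_some_iff p hinj hdisj ε x y).1 hxy
      rw [← hz1, ← hz2]
      exact h z
  -- the orientation is determined by the permutation
  have hdirdet : ∀ (ε : Fin m → Bool), ε j₀ = true →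
      ∀ σ : Equiv.Perm (Fin n), σ.IsCycle → σ.support = Finset.univ →
      (∀ z : (j : Fin m) × Fin (ks j), σ (psrc ks p ε z) = ptgt ks p ε z) →
      ∀ j, ε j = decide (σ (p j (Fin.castSucc ⟨0, hks j⟩)) = p j (Fin.succ ⟨0, hks j⟩)) := by
    intro ε hε σ hc hsup hcon j
    by_cases hej : ε j = true
    · rw [hej]
      have h := hcon ⟨j, ⟨0, hks j⟩⟩
      simp only [psrc, ptgt, hej, if_true] at h
      exact (decide_eq_true h).symm
    · have hejf : ε j = false := by simpa using hej
      rw [hejf]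
      have hB : σ (p j (Fin.succ ⟨0, hks j⟩)) = p j (Fin.castSucc ⟨0, hks j⟩) := by
        have h := hcon ⟨j, ⟨0, hks j⟩⟩
        simpa only [psrc, ptgt, hejf, if_false, Bool.false_eq_true] using h
      have hnF : ¬ σ (p j (Fin.castSucc ⟨0, hks j⟩)) = p j (Fin.succ ⟨0, hks j⟩) := by
        intro hF
        have h2 := no2 σ hc hsup (p j (Fin.castSucc ⟨0, hks j⟩)) (by rw [hF]; exact hB)
        have hm1 : m = 1 := by omega
        have hj : j = j₀ := by
          apply Fin.ext
          have := j.isLt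
          have hj00 : (j₀ : Fin m).1 = 0 := rfl
          omega
        rw [hj, hε] at hejf
        cases hejf
      exact (decide_eq_false hnF).symm
  -- the bijection between H-sets and oriented permutations
  have hAH : Nat.card {σ : Equiv.Perm (Fin n) // σ.IsCycle ∧ σ.support = Finset.univ ∧
        (∀ j, pathEdges n (ks j) (p j) ⊆ Finset.image (fun i => s(i, σ i)) Finset.univ) ∧
        σ (p j₀ (Fin.castSucc ⟨0, hks j₀⟩)) = p j₀ (Fin.succ ⟨0, hks j₀⟩)} =
      Nat.card {H : Finset (Sym2 (Fin n)) //
        isHamCycle n H ∧ ∀ j, pathEdges n (ks j) (p j) ⊆ H} := by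
    apply Nat.card_eq_of_bijective
      (fun σ => ⟨Finset.image (fun i => s(i, σ.1 i)) Finset.univ,
        ⟨σ.1, σ.2.1, σ.2.2.1, rfl⟩, σ.2.2.2.1⟩)
    constructor
    · intro z z' h
      have himg : Finset.image (fun i => s(i, z.1 i)) Finset.univ
          = Finset.image (fun i => s(i, z'.1 i)) Finset.univ := congrArg Subtype.val h
      have hv : z'.1 (p j₀ (Fin.castSucc ⟨0, hks j₀⟩)) = z.1 (p j₀ (Fin.castSucc ⟨0, hks j₀⟩)) :=
        (z'.2.2.2.2).trans (z.2.2.2.2).symm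
      have := uniq z.1 z'.1 z.2.1 z.2.2.1 z'.2.1 z'.2.2.1 himg _ hv
      exact Subtype.ext this.symm
    · intro Hs
      obtain ⟨H, ⟨σ, hc, hsup, hHeq⟩, hsubs⟩ := Hs
      subst hHeq
      by_cases hdir : σ (p j₀ (Fin.castSucc ⟨0, hks j₀⟩)) = p j₀ (Fin.succ ⟨0, hks j₀⟩)
      · exact ⟨⟨σ, hc, hsup, hsubs, hdir⟩, rfl⟩
      · have himginv : Finset.image (fun i => s(i, σ⁻¹ i)) Finset.univ
            = Finset.image (fun i => s(i, σ i)) Finset.univ := by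
          ext e
          induction e using Sym2.ind with
          | _ x y =>
            rw [Emem σ⁻¹ x y, Emem σ x y]
            constructor
            · rintro (h | h)
              · right; rw [← h, Equiv.Perm.inv_def, Equiv.apply_symm_apply]
              · left; rw [← h, Equiv.Perm.inv_def, Equiv.apply_symm_apply]
            · rintro (h | h)
              · right; rw [← h, Equiv.Perm.inv_def, Equiv.symm_apply_apply]
              · left; rw [← h, Equiv.Perm.inv_def, Equiv.symm_apply_apply]
        have hedge : s(p j₀ (Fin.castSucc ⟨0, hks j₀⟩), p j₀ (Fin.succ ⟨0, hks j₀⟩))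
            ∈ Finset.image (fun i => s(i, σ i)) Finset.univ := by
          apply hsubs j₀
          exact Finset.mem_image_of_mem _ (Finset.mem_univ (⟨0, hks j₀⟩ : Fin (ks j₀)))
        have hdir' : σ⁻¹ (p j₀ (Fin.castSucc ⟨0, hks j₀⟩)) = p j₀ (Fin.succ ⟨0, hks j₀⟩) := by
          rcases (Emem σ _ _).1 hedge with h | h
          · exact absurd h hdir
          · rw [← h, Equiv.Perm.inv_def, Equiv.symm_apply_apply]
        refine ⟨⟨σ⁻¹, hc.inv, ?_, ?_, hdir'⟩, ?_⟩
        · rw [Equiv.Perm.support_inv]; exact hsup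
        · intro j; rw [himginv]; exact hsubs j
        · exact Subtype.ext himginv
  -- the sigma decomposition
  have gdef : ∀ (ε : {ε : Fin m → Bool // ε j₀ = true})
      (σ : {σ : Equiv.Perm (Fin n) // σ.IsCycle ∧ σ.support = Finset.univ ∧
        ∀ x y, cfun ks p ε.1 x = some y → σ x = y}),
      σ.1.IsCycle ∧ σ.1.support = Finset.univ ∧
      (∀ j, pathEdges n (ks j) (p j) ⊆ Finset.image (fun i => s(i, σ.1 i)) Finset.univ) ∧
      σ.1 (p j₀ (Fin.castSucc ⟨0, hks j₀⟩)) = p j₀ (Fin.succ ⟨0, hks j₀⟩) := by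
    rintro ⟨ε, hε⟩ ⟨σ, hc, hsup, hcon⟩
    have hcon' : ∀ z : (j : Fin m) × Fin (ks j), σ (psrc ks p ε z) = ptgt ks p ε z :=
      (hconst ε σ).1 hcon
    refine ⟨hc, hsup, ?_, ?_⟩
    · intro j
      rw [Psub]
      intro i
      rw [Emem]
      have h := hcon' ⟨j, i⟩
      by_cases hej : ε j = true
      · left
        simpa only [psrc, ptgt, hej, if_true] using h
      · have hejf : ε j = false := by simpa using hej
        right
        simpa only [psrc, ptgt, hejf, if_false, Bool.false_eq_true] using h
    · have h := hcon' ⟨j₀, ⟨0, hks j₀⟩⟩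
      simpa only [psrc, ptgt, hε, if_true] using h
  have hSig : Nat.card {σ : Equiv.Perm (Fin n) // σ.IsCycle ∧ σ.support = Finset.univ ∧
        (∀ j, pathEdges n (ks j) (p j) ⊆ Finset.image (fun i => s(i, σ i)) Finset.univ) ∧
        σ (p j₀ (Fin.castSucc ⟨0, hks j₀⟩)) = p j₀ (Fin.succ ⟨0, hks j₀⟩)} =
      Nat.card ((ε : {ε : Fin m → Bool // ε j₀ = true}) ×
        {σ : Equiv.Perm (Fin n) // σ.IsCycle ∧ σ.support = Finset.univ ∧
          ∀ x y, cfun ks p ε.1 x = some y → σ x = y}) := by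
    symm
    apply Nat.card_eq_of_bijective (fun z => ⟨z.2.1, gdef z.1 z.2⟩)
    constructor
    · rintro ⟨⟨ε, hε⟩, σ, hσ⟩ ⟨⟨ε', hε'⟩, σ', hσ'⟩ h
      have hσσ : σ = σ' := congrArg Subtype.val h
      have hee : ε = ε' := by
        funext j
        have d1 := hdirdet ε hε σ hσ.1 hσ.2.1 ((hconst ε σ).1 hσ.2.2) j
        have d2 := hdirdet ε' hε' σ' hσ'.1 hσ'.2.1 ((hconst ε' σ').1 hσ'.2.2) j
        rw [d1, d2, hσσ]
      subst hee
      subst hσσ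
      rfl
    · intro a
      obtain ⟨σ, hc, hsup, hedges, hfwd⟩ := a
      have hFB : ∀ j (i : Fin (ks j)),
          σ (p j i.castSucc) = p j i.succ ∨ σ (p j i.succ) = p j i.castSucc := by
        intro j i
        exact (Emem σ _ _).1 ((Psub j _).1 (hedges j) i)
      have hε0 : (fun j => decide (σ (p j (Fin.castSucc ⟨0, hks j⟩))
          = p j (Fin.succ ⟨0, hks j⟩))) j₀ = true := decide_eq_true hfwd
      have hcon' : ∀ z : (j : Fin m) × Fin (ks j),
          σ (psrc ks p (fun j => decide (σ (p j (Fin.castSucc ⟨0, hks j⟩))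
            = p j (Fin.succ ⟨0, hks j⟩))) z)
          = ptgt ks p (fun j => decide (σ (p j (Fin.castSucc ⟨0, hks j⟩))
            = p j (Fin.succ ⟨0, hks j⟩))) z := by
        rintro ⟨j, i⟩
        by_cases hej : σ (p j (Fin.castSucc ⟨0, hks j⟩)) = p j (Fin.succ ⟨0, hks j⟩)
        · have hεj : decide (σ (p j (Fin.castSucc ⟨0, hks j⟩))
              = p j (Fin.succ ⟨0, hks j⟩)) = true := decide_eq_true hej
          have hall := fwd_prop (hks j) σ (p j) (hinj j) (hFB j) hej
          simpa only [psrc, ptgt, hεj, if_true] using hall i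
        · have hεj : decide (σ (p j (Fin.castSucc ⟨0, hks j⟩))
              = p j (Fin.succ ⟨0, hks j⟩)) = false := decide_eq_false hej
          have hall := bwd_prop (hks j) σ (p j) (hinj j) (hFB j) hej
          simpa only [psrc, ptgt, hεj, if_false, Bool.false_eq_true] using hall i
      exact ⟨⟨⟨_, hε0⟩, σ, hc, hsup, (hconst _ σ).2 hcon'⟩, Subtype.ext rfl⟩
  -- the cardinality of the orientation index
  have hI : Fintype.card {ε : Fin m → Bool // ε j₀ = true} = 2 ^ (m - 1) := by
    have E3 : {ε : Fin m → Bool // ε j₀ = true} ≃ ({j : Fin m // j ≠ j₀} → Bool) :=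
      { toFun := fun ε j => ε.1 j.1
        invFun := fun g => ⟨fun j => if h : j = j₀ then true else g ⟨j, h⟩, by simp⟩
        left_inv := by
          intro ε
          apply Subtype.ext
          funext j
          by_cases h : j = j₀
          · subst h; simp [ε.2]
          · simp [h]
        right_inv := by
          intro g
          funext j
          simp [j.2] }
    rw [Fintype.card_congr E3, Fintype.card_fun, Fintype.card_bool]
    congr 1
    have h1 : Fintype.card {j : Fin m // j = j₀} = 1 := Fintype.card_subtype_eq j₀
    have := Fintype.card_subtype_compl (fun j : Fin m => j = j₀)
    rw [this, h1, Fintype.card_fin]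
  -- put everything together
  rw [← hAH, hSig, nat_card_sigma]
  rw [Finset.sum_congr rfl (fun ε _ => hfib ε.1), Finset.sum_const, smul_eq_mul,
    Finset.card_univ, hI]
end

section
/- Let m_1, ..., m_p be nonnegative integers and n a positive integer with n ≥ Σ_{i=1}^p (i+1)·m_i. The number of ways to choose, inside a path on n vertices, a family of pairwise vertex-disjoint subpaths consisting of m_i paths of length i for each i = 1,...,p, equals (n - Σ_{i=1}^p i·m_i)_{(Σ_{i=1}^p m_i)} / ∏_{i=1}^p m_i!, where (a)_{(b)} = a(a-1)···(a-b+1) denotes the falling factorial. -/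
open Finset

namespace CountAux

variable {p : ℕ}

/-- length contribution of a label: a subpath of type `i` contracts away `i+1` vertices. -/
def plen (o : Option (Fin p)) : ℕ := o.elim 0 fun i => (i : ℕ) + 1

/-- expanded position of slot `s` under labeling `f`. -/
def cpos (f : ℕ → Option (Fin p)) (s : ℕ) : ℕ := s + ∑ t ∈ Finset.range s, plen (f t)

lemma cpos_succ (f : ℕ → Option (Fin p)) (s : ℕ) :
    cpos f (s + 1) = cpos f s + 1 + plen (f s) := by
  simp [cpos, Finset.sum_range_succ]; ring

lemma cpos_strictMono (f : ℕ → Option (Fin p)) : StrictMono (cpos f) := by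
  apply strictMono_nat_of_lt_succ
  intro s; rw [cpos_succ]; omega

lemma cpos_add_plen_lt (f : ℕ → Option (Fin p)) {s s' : ℕ} (h : s < s') :
    cpos f s + plen (f s) < cpos f s' := by
  have h1 : cpos f (s + 1) ≤ cpos f s' := (cpos_strictMono f).monotone h
  rw [cpos_succ] at h1; omega

lemma plen_eq_sum (o : Option (Fin p)) :
    plen o = ∑ i : Fin p, if o = some i then (i : ℕ) + 1 else 0 := by
  cases o with
  | none => simp [plen]
  | some j => simp [plen]

lemma sum_plen {N : ℕ} {m : Fin p → ℕ} (f : ℕ → Option (Fin p))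
    (hfib : ∀ i, ((Finset.range N).filter fun s => f s = some i).card = m i) :
    ∑ t ∈ Finset.range N, plen (f t) = ∑ i : Fin p, ((i : ℕ) + 1) * m i := by
  calc ∑ t ∈ Finset.range N, plen (f t)
      = ∑ t ∈ Finset.range N, ∑ i : Fin p, (if f t = some i then (i : ℕ) + 1 else 0) := by
        simp_rw [← plen_eq_sum]
    _ = ∑ i : Fin p, ∑ t ∈ Finset.range N, (if f t = some i then (i : ℕ) + 1 else 0) :=
        Finset.sum_comm
    _ = ∑ i : Fin p, ((i : ℕ) + 1) * m i := by
        refine Finset.sum_congr rfl fun i _ => ?_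
        rw [← Finset.sum_filter, Finset.sum_const, hfib i]
        simp [mul_comm]


section Geom

variable {n : ℕ} {m : Fin p → ℕ} {starts : Fin p → Finset ℕ}

/-- total contracted weight of intervals starting strictly before `x`. -/
def wgt (starts : Fin p → Finset ℕ) (x : ℕ) : ℕ :=
  ∑ j : Fin p, ((j : ℕ) + 1) * ((starts j).filter (· < x)).card

variable
  (hb : ∀ i, ∀ a ∈ starts i, a + ((i : ℕ) + 1) ≤ n - 1)
  (hc : ∀ i, (starts i).card = m i)
  (hd : ∀ i j, ∀ a ∈ starts i, ∀ b ∈ starts j, (i ≠ j ∨ a ≠ b) →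
    Disjoint (Finset.Icc a (a + (i : ℕ) + 1)) (Finset.Icc b (b + (j : ℕ) + 1)))

include hd in
lemma end_lt {i j : Fin p} {a b : ℕ} (ha : a ∈ starts i) (hbm : b ∈ starts j)
    (hlt : b < a) : b + (j : ℕ) + 1 < a := by
  have hdisj := hd i j a ha b hbm (Or.inr (by omega))
  by_contra hcon
  have : a ∈ Finset.Icc b (b + (j : ℕ) + 1) := by
    rw [Finset.mem_Icc]; omega
  exact (Finset.disjoint_right.1 hdisj this) (by rw [Finset.mem_Icc]; omega)

include hd in
lemma same_start {i j : Fin p} {a : ℕ} (ha : a ∈ starts i) (hbm : a ∈ starts j) : i = j := by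
  by_contra hij
  have hdisj := hd i j a ha a hbm (Or.inl hij)
  have h1 : a ∈ Finset.Icc a (a + (j : ℕ) + 1) := by rw [Finset.mem_Icc]; omega
  have h2 : a ∈ Finset.Icc a (a + (i : ℕ) + 1) := by rw [Finset.mem_Icc]; omega
  exact (Finset.disjoint_right.1 hdisj h1) h2

include hd in
lemma packing (x y : ℕ)
    (hend : ∀ j, ∀ b ∈ starts j, x ≤ b → b < y → b + (j : ℕ) + 1 < y) :
    ∑ j : Fin p, ((j : ℕ) + 2) * ((starts j).filter (fun b => x ≤ b ∧ b < y)).card ≤ y - x := by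
  classical
  set S : Finset ((_ : Fin p) × ℕ) :=
    Finset.univ.sigma (fun j => (starts j).filter (fun b => x ≤ b ∧ b < y)) with hS
  have hmem : ∀ q ∈ S, q.2 ∈ starts q.1 ∧ x ≤ q.2 ∧ q.2 < y := by
    intro q hq
    rw [hS, Finset.mem_sigma] at hq
    have := hq.2
    rw [Finset.mem_filter] at this
    exact ⟨this.1, this.2⟩
  have hcard : (S.biUnion (fun q => Finset.Icc q.2 (q.2 + (q.1 : ℕ) + 1))).card
      = ∑ q ∈ S, (Finset.Icc q.2 (q.2 + (q.1 : ℕ) + 1)).card := by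
    apply Finset.card_biUnion
    intro q hq q' hq' hne
    obtain ⟨h1, _, _⟩ := hmem q hq
    obtain ⟨h1', _, _⟩ := hmem q' hq'
    apply hd _ _ _ h1 _ h1'
    by_contra hcon
    push_neg at hcon
    exact hne (Sigma.ext hcon.1 (heq_of_eq hcon.2))
  have hsub : S.biUnion (fun q => Finset.Icc q.2 (q.2 + (q.1 : ℕ) + 1)) ⊆ Finset.Ico x y := by
    intro t ht
    rw [Finset.mem_biUnion] at ht
    obtain ⟨q, hq, htq⟩ := ht
    obtain ⟨h1, h2, h3⟩ := hmem q hq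
    rw [Finset.mem_Icc] at htq
    have := hend q.1 q.2 h1 h2 h3
    rw [Finset.mem_Ico]; omega
  have hle := Finset.card_le_card hsub
  rw [hcard, Nat.card_Ico] at hle
  calc ∑ j : Fin p, ((j : ℕ) + 2) * ((starts j).filter (fun b => x ≤ b ∧ b < y)).card
      = ∑ q ∈ S, (Finset.Icc q.2 (q.2 + (q.1 : ℕ) + 1)).card := by
        rw [hS, Finset.sum_sigma]
        refine Finset.sum_congr rfl fun j _ => ?_
        simp only [Nat.card_Icc]
        have hval : ∀ s : ℕ, s + (j : ℕ) + 1 + 1 - s = (j : ℕ) + 2 := fun s => by omega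
        simp [hval, Finset.sum_const, mul_comm]
    _ ≤ y - x := hle


lemma filter_split (s : Finset ℕ) {x y : ℕ} (hxy : x ≤ y) :
    (s.filter (· < y)).card
      = (s.filter (· < x)).card + (s.filter (fun b => x ≤ b ∧ b < y)).card := by
  classical
  have hset : s.filter (· < y) = s.filter (· < x) ∪ s.filter (fun b => x ≤ b ∧ b < y) := by
    ext b
    simp only [Finset.mem_filter, Finset.mem_union]
    constructor
    · rintro ⟨hs, hby⟩
      by_cases hx : b < x
      · exact Or.inl ⟨hs, hx⟩
      · exact Or.inr ⟨hs, by omega⟩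
    · rintro (⟨hs, h⟩ | ⟨hs, h⟩) <;> exact ⟨hs, by omega⟩
  have hdis : Disjoint (s.filter (· < x)) (s.filter fun b => x ≤ b ∧ b < y) := by
    rw [Finset.disjoint_left]
    intro b h1 h2
    rw [Finset.mem_filter] at h1 h2
    omega
  rw [hset, Finset.card_union_of_disjoint hdis]

lemma wgt_split {x y : ℕ} (hxy : x ≤ y) :
    wgt starts y = wgt starts x
      + ∑ j : Fin p, ((j : ℕ) + 1) * ((starts j).filter (fun b => x ≤ b ∧ b < y)).card := by
  unfold wgt
  rw [← Finset.sum_add_distrib]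
  refine Finset.sum_congr rfl fun j _ => ?_
  rw [filter_split _ hxy, mul_add]

lemma sum_two_split (x y : ℕ) :
    ∑ j : Fin p, ((j : ℕ) + 2) * ((starts j).filter (fun b => x ≤ b ∧ b < y)).card
      = (∑ j : Fin p, ((j : ℕ) + 1) * ((starts j).filter (fun b => x ≤ b ∧ b < y)).card)
        + ∑ j : Fin p, ((starts j).filter (fun b => x ≤ b ∧ b < y)).card := by
  rw [← Finset.sum_add_distrib]
  exact Finset.sum_congr rfl fun j _ => by ring

include hd in
lemma wgt_le (x : ℕ)
    (hend : ∀ j, ∀ b ∈ starts j, b < x → b + (j : ℕ) + 1 < x) :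
    wgt starts x ≤ x := by
  have hp := packing hd 0 x (fun j b hbm _ hbx => hend j b hbm hbx)
  have heq : ∀ j : Fin p, (starts j).filter (fun b => 0 ≤ b ∧ b < x)
      = (starts j).filter (· < x) := by
    intro j
    apply Finset.filter_congr
    intro b _
    simp
  simp only [heq] at hp
  calc wgt starts x ≤ ∑ j : Fin p, ((j : ℕ) + 2) * ((starts j).filter (· < x)).card := by
        apply Finset.sum_le_sum
        intro j _
        exact Nat.mul_le_mul_right _ (by omega)
    _ ≤ x := by simpa using hp

include hd in
lemma ctr_lt_ctr {i j : Fin p} {a b : ℕ} (ha : a ∈ starts i) (hbm : b ∈ starts j)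
    (hab : a < b) : a - wgt starts a < b - wgt starts b := by
  have hwa : wgt starts a ≤ a :=
    wgt_le hd a (fun j' b' hb' hlt => end_lt hd ha hb' hlt)
  have hsplit := wgt_split (starts := starts) (le_of_lt hab)
  have hpack := packing hd a b (fun j' b' hb' _ hlt => end_lt hd hbm hb' hlt)
  have h2 := sum_two_split (starts := starts) a b
  have hS2 : 1 ≤ ∑ j' : Fin p, ((starts j').filter (fun c => a ≤ c ∧ c < b)).card := by
    have hone : 1 ≤ ((starts i).filter (fun c => a ≤ c ∧ c < b)).card := by
      rw [Nat.succ_le_iff, Finset.card_pos]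
      exact ⟨a, Finset.mem_filter.2 ⟨ha, le_refl a, hab⟩⟩
    calc 1 ≤ ((starts i).filter (fun c => a ≤ c ∧ c < b)).card := hone
      _ ≤ _ := Finset.single_le_sum
        (f := fun j' : Fin p => ((starts j').filter (fun c => a ≤ c ∧ c < b)).card)
        (fun _ _ => Nat.zero_le _) (Finset.mem_univ i)
  omega

include hb hc hd in
lemma ctr_lt_N (hn : 1 ≤ n) {i : Fin p} {a : ℕ} (ha : a ∈ starts i) :
    a - wgt starts a + ∑ j : Fin p, ((j : ℕ) + 1) * m j < n := by
  have han : a < n := by have := hb i a ha; omega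
  have hall : ∀ j : Fin p, (starts j).filter (· < n) = starts j := fun j =>
    Finset.filter_true_of_mem (fun b hbm => by have := hb j b hbm; omega)
  have hwn : wgt starts n = ∑ j : Fin p, ((j : ℕ) + 1) * m j := by
    unfold wgt
    exact Finset.sum_congr rfl fun j _ => by rw [hall j, hc j]
  have hsplit := wgt_split (starts := starts) (le_of_lt han)
  have hpack := packing hd a n (fun j' b' hb' _ _ => by have := hb j' b' hb'; omega)
  have h2 := sum_two_split (starts := starts) a n
  have hS2 : 1 ≤ ∑ j' : Fin p, ((starts j').filter (fun c => a ≤ c ∧ c < n)).card := by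
    have hone : 1 ≤ ((starts i).filter (fun c => a ≤ c ∧ c < n)).card := by
      rw [Nat.succ_le_iff, Finset.card_pos]
      exact ⟨a, Finset.mem_filter.2 ⟨ha, le_refl a, han⟩⟩
    calc 1 ≤ ((starts i).filter (fun c => a ≤ c ∧ c < n)).card := hone
      _ ≤ _ := Finset.single_le_sum
        (f := fun j' : Fin p => ((starts j').filter (fun c => a ≤ c ∧ c < n)).card)
        (fun _ _ => Nat.zero_le _) (Finset.mem_univ i)
  have hwa : wgt starts a ≤ a :=
    wgt_le hd a (fun j' b' hb' hlt => end_lt hd ha hb' hlt)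
  omega


include hd in
lemma ctr_inj_pair {i i' : Fin p} {a a' : ℕ} (ha : a ∈ starts i) (ha' : a' ∈ starts i')
    (h : a - wgt starts a = a' - wgt starts a') : a = a' ∧ i = i' := by
  have haa : a = a' := by
    rcases lt_trichotomy a a' with h1 | h1 | h1
    · have := ctr_lt_ctr hd ha ha' h1; omega
    · exact h1
    · have := ctr_lt_ctr hd ha' ha h1; omega
  subst haa
  exact ⟨rfl, same_start hd ha ha'⟩

open scoped Classical in
/-- contraction of a family of disjoint intervals to a labeling of slots. -/
noncomputable def ctr (starts : Fin p → Finset ℕ) (s : ℕ) : Option (Fin p) :=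
  if h : ∃ j : Fin p, ∃ a ∈ starts j, a - wgt starts a = s then some h.choose else none

include hd in
lemma ctr_eq_some_iff {s : ℕ} {i : Fin p} :
    ctr starts s = some i ↔ ∃ a ∈ starts i, a - wgt starts a = s := by
  unfold ctr
  split
  case isTrue h =>
    obtain ⟨a0, ha0, hs0⟩ := h.choose_spec
    constructor
    · intro heq
      rw [Option.some_inj] at heq
      exact ⟨a0, heq ▸ ha0, hs0⟩
    · rintro ⟨a, ha, hs⟩
      obtain ⟨-, hii⟩ := ctr_inj_pair hd ha0 ha (hs0.trans hs.symm)
      rw [Option.some_inj]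
      exact hii
  case isFalse h =>
    constructor
    · intro heq; exact absurd heq (by simp)
    · rintro ⟨a, ha, hs⟩
      exact absurd ⟨i, a, ha, hs⟩ h

include hb hc hd in
lemma ctr_none {s : ℕ} (hn : 1 ≤ n)
    (hs : n - ∑ j : Fin p, ((j : ℕ) + 1) * m j ≤ s) : ctr starts s = none := by
  cases hck : ctr starts s with
  | none => rfl
  | some i =>
    obtain ⟨a, ha, hsa⟩ := (ctr_eq_some_iff hd).1 hck
    have := ctr_lt_N hb hc hd hn ha
    omega

include hb hc hd in
lemma ctr_fiber (hn : 1 ≤ n) (i : Fin p) :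
    ((Finset.range (n - ∑ j : Fin p, ((j : ℕ) + 1) * m j)).filter
        (fun s => ctr starts s = some i))
      = (starts i).image (fun a => a - wgt starts a) := by
  ext s
  simp only [Finset.mem_filter, Finset.mem_range, Finset.mem_image, ctr_eq_some_iff hd]
  constructor
  · rintro ⟨hsN, a, ha, hs⟩
    exact ⟨a, ha, hs⟩
  · rintro ⟨a, ha, hs⟩
    have := ctr_lt_N hb hc hd hn ha
    exact ⟨by omega, a, ha, hs⟩

include hb hc hd in
lemma ctr_fiber_card (hn : 1 ≤ n) (i : Fin p) :
    ((Finset.range (n - ∑ j : Fin p, ((j : ℕ) + 1) * m j)).filter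
        (fun s => ctr starts s = some i)).card = m i := by
  rw [ctr_fiber hb hc hd hn i, Finset.card_image_of_injOn, hc i]
  intro a ha a' ha' hval
  exact (ctr_inj_pair hd ha ha' hval).1

end Geom

section CtrInj

variable {starts starts' : Fin p → Finset ℕ}

lemma ctr_inj_aux
    (hd : ∀ i j, ∀ a ∈ starts i, ∀ b ∈ starts j, (i ≠ j ∨ a ≠ b) →
      Disjoint (Finset.Icc a (a + (i : ℕ) + 1)) (Finset.Icc b (b + (j : ℕ) + 1)))
    (hd' : ∀ i j, ∀ a ∈ starts' i, ∀ b ∈ starts' j, (i ≠ j ∨ a ≠ b) →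
      Disjoint (Finset.Icc a (a + (i : ℕ) + 1)) (Finset.Icc b (b + (j : ℕ) + 1)))
    (heq : ∀ s, ctr starts s = ctr starts' s)
    {a₀ : ℕ} (hmin : ∀ b < a₀, ∀ j, b ∈ starts j ↔ b ∈ starts' j)
    {i : Fin p} (hmem : a₀ ∈ starts i) (hnot : a₀ ∉ starts' i) : False := by
  have hwagree : ∀ x, x ≤ a₀ → wgt starts x = wgt starts' x := by
    intro x hx
    unfold wgt
    refine Finset.sum_congr rfl fun j _ => ?_
    congr 2
    ext b
    simp only [Finset.mem_filter]
    constructor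
    · rintro ⟨h1, h2⟩; exact ⟨(hmin b (by omega) j).mp h1, h2⟩
    · rintro ⟨h1, h2⟩; exact ⟨(hmin b (by omega) j).mpr h1, h2⟩
  have h1 : ctr starts (a₀ - wgt starts a₀) = some i :=
    (ctr_eq_some_iff hd).2 ⟨a₀, hmem, rfl⟩
  have h2 : ctr starts' (a₀ - wgt starts a₀) = some i := (heq _) ▸ h1
  obtain ⟨a', ha', hs'⟩ := (ctr_eq_some_iff hd').1 h2
  have hnp : ∀ j, a₀ ∉ starts' j := by
    intro j hj
    have h3 : ctr starts' (a₀ - wgt starts' a₀) = some j :=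
      (ctr_eq_some_iff hd').2 ⟨a₀, hj, rfl⟩
    rw [← hwagree a₀ le_rfl, h2] at h3
    rw [Option.some_inj] at h3
    exact hnot (h3 ▸ hj)
  have hne : a' ≠ a₀ := fun h => hnp i (h ▸ ha')
  rcases lt_or_gt_of_ne hne with hlt | hgt
  · have ha'' : a' ∈ starts i := (hmin a' hlt i).mpr ha'
    have hvw : a' - wgt starts a' = a₀ - wgt starts a₀ := by
      rw [hwagree a' (le_of_lt hlt)]; exact hs'
    exact hne (ctr_inj_pair hd ha'' hmem hvw).1
  · have hw0 : wgt starts' a₀ ≤ a₀ := by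
      apply wgt_le hd'
      intro j' b' hb' hltb
      exact end_lt hd hmem ((hmin b' hltb j').mpr hb') hltb
    have hsplit := wgt_split (starts := starts') (le_of_lt hgt)
    have hpack := packing hd' a₀ a' (fun j' b' hb' _ hlt => end_lt hd' ha' hb' hlt)
    have h2s := sum_two_split (starts := starts') a₀ a'
    have hseq : a' - wgt starts' a' = a₀ - wgt starts' a₀ := by
      rw [hs', hwagree a₀ le_rfl]
    rcases Nat.eq_zero_or_pos
        (∑ j : Fin p, ((starts' j).filter (fun c => a₀ ≤ c ∧ c < a')).card) with h0 | h0
    · have hS10 : (∑ j : Fin p, ((j : ℕ) + 1)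
          * ((starts' j).filter (fun c => a₀ ≤ c ∧ c < a')).card) = 0 := by
        rw [Finset.sum_eq_zero_iff] at h0
        apply Finset.sum_eq_zero
        intro j hju
        rw [h0 j hju, mul_zero]
      omega
    · omega

lemma ctr_injective
    (hd : ∀ i j, ∀ a ∈ starts i, ∀ b ∈ starts j, (i ≠ j ∨ a ≠ b) →
      Disjoint (Finset.Icc a (a + (i : ℕ) + 1)) (Finset.Icc b (b + (j : ℕ) + 1)))
    (hd' : ∀ i j, ∀ a ∈ starts' i, ∀ b ∈ starts' j, (i ≠ j ∨ a ≠ b) →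
      Disjoint (Finset.Icc a (a + (i : ℕ) + 1)) (Finset.Icc b (b + (j : ℕ) + 1)))
    (heq : ∀ s, ctr starts s = ctr starts' s) : starts = starts' := by
  classical
  by_contra hne
  have hex : ∃ a : ℕ, ∃ j : Fin p, ¬ (a ∈ starts j ↔ a ∈ starts' j) := by
    by_contra hax
    push_neg at hax
    apply hne
    funext j
    ext a
    exact hax a j
  obtain ⟨i, hi⟩ := Nat.find_spec hex
  have hmin : ∀ b < Nat.find hex, ∀ j, b ∈ starts j ↔ b ∈ starts' j := by
    intro b hbm j
    by_contra hcon
    exact Nat.find_min hex hbm ⟨j, hcon⟩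
  by_cases hms : Nat.find hex ∈ starts i
  · have hns : Nat.find hex ∉ starts' i := fun h => hi ⟨fun _ => h, fun _ => hms⟩
    exact ctr_inj_aux hd hd' heq hmin hms hns
  · have hms' : Nat.find hex ∈ starts' i := by
      by_contra h
      exact hi ⟨fun h2 => absurd h2 hms, fun h2 => absurd h2 h⟩
    exact ctr_inj_aux hd' hd (fun s => (heq s).symm)
      (fun b hbm j => (hmin b hbm j).symm) hms' hms

end CtrInj
section Expand

variable {N : ℕ} {m : Fin p → ℕ}

/-- expansion of a labeling of `N` slots into a family of disjoint intervals. -/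
def epand (f : ℕ → Option (Fin p)) (N : ℕ) (i : Fin p) : Finset ℕ :=
  ((Finset.range N).filter fun s => f s = some i).image (cpos f)

lemma epand_card (f : ℕ → Option (Fin p))
    (hfib : ∀ i, ((Finset.range N).filter fun s => f s = some i).card = m i) (i : Fin p) :
    (epand f N i).card = m i := by
  unfold epand
  rw [Finset.card_image_of_injective _ (cpos_strictMono f).injective, hfib i]

lemma epand_bound {n : ℕ} (f : ℕ → Option (Fin p))
    (hfib : ∀ i, ((Finset.range N).filter fun s => f s = some i).card = m i)
    (hNn : N + ∑ j : Fin p, ((j : ℕ) + 1) * m j = n) (i : Fin p) :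
    ∀ a ∈ epand f N i, a + ((i : ℕ) + 1) ≤ n - 1 := by
  intro a ha
  unfold epand at ha
  rw [Finset.mem_image] at ha
  obtain ⟨s, hs, rfl⟩ := ha
  rw [Finset.mem_filter, Finset.mem_range] at hs
  have hplen : plen (f s) = (i : ℕ) + 1 := by rw [hs.2]; rfl
  have hstep : cpos f s + plen (f s) ≤ (N - 1) + ∑ t ∈ Finset.range N, plen (f t) := by
    have h1 : cpos f s + plen (f s) = s + ∑ t ∈ Finset.range (s + 1), plen (f t) := by
      rw [Finset.sum_range_succ, cpos]; ring
    have h2 : ∑ t ∈ Finset.range (s + 1), plen (f t) ≤ ∑ t ∈ Finset.range N, plen (f t) :=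
      Finset.sum_le_sum_of_subset (Finset.range_subset_range.2 (by omega))
    omega
  rw [sum_plen f hfib] at hstep
  omega

lemma epand_disjoint (f : ℕ → Option (Fin p)) (i j : Fin p) :
    ∀ a ∈ epand f N i, ∀ b ∈ epand f N j, (i ≠ j ∨ a ≠ b) →
      Disjoint (Finset.Icc a (a + (i : ℕ) + 1)) (Finset.Icc b (b + (j : ℕ) + 1)) := by
  have key : ∀ (s s' : ℕ) (i' j' : Fin p), s < s' → f s = some i' → f s' = some j' →
      Disjoint (Finset.Icc (cpos f s) (cpos f s + (i' : ℕ) + 1))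
        (Finset.Icc (cpos f s') (cpos f s' + (j' : ℕ) + 1)) := by
    intro s s' i' j' hss hfs hfs'
    have hlt := cpos_add_plen_lt f hss
    have hplen : plen (f s) = (i' : ℕ) + 1 := by rw [hfs]; rfl
    rw [Finset.disjoint_left]
    intro x hx hx'
    rw [Finset.mem_Icc] at hx hx'
    omega
  intro a ha b hbm hij
  unfold epand at ha hbm
  rw [Finset.mem_image] at ha hbm
  obtain ⟨s, hs, rfl⟩ := ha
  obtain ⟨s', hs', rfl⟩ := hbm
  rw [Finset.mem_filter] at hs hs'
  have hss : s ≠ s' := by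
    rintro rfl
    have h1 : i = j := by
      have := hs.2.symm.trans hs'.2
      rwa [Option.some_inj] at this
    rcases hij with h | h
    · exact h h1
    · exact h rfl
  rcases lt_or_gt_of_ne hss with h | h
  · exact key s s' i j h hs.2 hs'.2
  · exact (key s' s j i h hs'.2 hs.2).symm

lemma epand_injective {f g : ℕ → Option (Fin p)}
    (hfs : ∀ s, N ≤ s → f s = none) (hgs : ∀ s, N ≤ s → g s = none)
    (heq : ∀ i, epand f N i = epand g N i) : f = g := by
  classical
  by_contra hne
  have hex : ∃ s, f s ≠ g s := Function.ne_iff.1 hne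
  have hmin : ∀ t < Nat.find hex, f t = g t := fun t ht => by
    by_contra hcon
    exact Nat.find_min hex ht hcon
  set s₀ := Nat.find hex with hs₀
  have hcp : cpos f s₀ = cpos g s₀ := by
    unfold cpos
    congr 1
    exact Finset.sum_congr rfl fun t ht => by rw [hmin t (Finset.mem_range.1 ht)]
  have keyf : ∀ i : Fin p, cpos f s₀ ∈ epand f N i ↔ f s₀ = some i := by
    intro i
    unfold epand
    rw [Finset.mem_image]
    constructor
    · rintro ⟨s, hs, hcs⟩
      rw [Finset.mem_filter] at hs
      exact (cpos_strictMono f).injective hcs ▸ hs.2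
    · intro hf
      have hsN : s₀ < N := by
        by_contra hcon
        rw [hfs s₀ (by omega)] at hf
        exact absurd hf (by simp)
      exact ⟨s₀, Finset.mem_filter.2 ⟨Finset.mem_range.2 hsN, hf⟩, rfl⟩
  have keyg : ∀ i : Fin p, cpos g s₀ ∈ epand g N i ↔ g s₀ = some i := by
    intro i
    unfold epand
    rw [Finset.mem_image]
    constructor
    · rintro ⟨s, hs, hcs⟩
      rw [Finset.mem_filter] at hs
      exact (cpos_strictMono g).injective hcs ▸ hs.2
    · intro hf
      have hsN : s₀ < N := by
        by_contra hcon
        rw [hgs s₀ (by omega)] at hf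
        exact absurd hf (by simp)
      exact ⟨s₀, Finset.mem_filter.2 ⟨Finset.mem_range.2 hsN, hf⟩, rfl⟩
  have : f s₀ = g s₀ := by
    cases hfv : f s₀ with
    | some i =>
      have h1 : cpos f s₀ ∈ epand f N i := (keyf i).2 hfv
      rw [heq i, hcp] at h1
      exact ((keyg i).1 h1).symm ▸ rfl
    | none =>
      cases hgv : g s₀ with
      | none => rfl
      | some j =>
        have h1 : cpos g s₀ ∈ epand g N j := (keyg j).2 hgv
        rw [← heq j, ← hcp] at h1
        rw [(keyf j).1 h1] at hfv
        exact absurd hfv (by simp)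
  exact Nat.find_spec hex this

end Expand
section Count

variable {N : ℕ} {m : Fin p → ℕ}

open scoped Classical

/-- labelings of `Fin N` with prescribed fiber cardinalities. -/
def Lab (N : ℕ) (m : Fin p → ℕ) : Type _ :=
  {f : Fin N → Option (Fin p) // ∀ i, (Finset.univ.filter fun s => f s = some i).card = m i}

noncomputable instance : Fintype (Lab (p := p) N m) := by
  unfold Lab; infer_instance

/-- the type-and-order data. -/
abbrev Idx (m : Fin p → ℕ) : Type _ := Σ i : Fin p, Fin (m i)

noncomputable def Phi (g : Idx m ↪ Fin N) (s : Fin N) : Option (Fin p) :=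
  if h : ∃ x : Idx m, g x = s then some h.choose.1 else none

lemma Phi_eq_some_iff (g : Idx m ↪ Fin N) (s : Fin N) (i : Fin p) :
    Phi g s = some i ↔ ∃ x : Fin (m i), g ⟨i, x⟩ = s := by
  unfold Phi
  split
  case isTrue h =>
    have hgc := h.choose_spec
    constructor
    · intro heq
      rw [Option.some_inj] at heq
      subst heq
      exact ⟨h.choose.2, hgc⟩
    · rintro ⟨x, hx⟩
      have : h.choose = ⟨i, x⟩ := g.injective (hgc.trans hx.symm)
      rw [Option.some_inj, this]
  case isFalse h =>
    constructor
    · intro heq; exact absurd heq (by simp)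
    · rintro ⟨x, hx⟩
      exact absurd ⟨⟨i, x⟩, hx⟩ h

lemma Phi_fiber (g : Idx m ↪ Fin N) (i : Fin p) :
    (Finset.univ.filter fun s => Phi g s = some i)
      = Finset.univ.image (fun x : Fin (m i) => g ⟨i, x⟩) := by
  ext s
  simp only [Finset.mem_filter, Finset.mem_image, Finset.mem_univ, true_and]
  rw [Phi_eq_some_iff]

lemma Phi_fiber_card (g : Idx m ↪ Fin N) (i : Fin p) :
    (Finset.univ.filter fun s => Phi g s = some i).card = m i := by
  rw [Phi_fiber]
  rw [Finset.card_image_of_injective _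
    (fun x y h => @sigma_mk_injective (Fin p) (fun j => Fin (m j)) i x y (g.injective h))]
  simp

noncomputable def Phi' (g : Idx m ↪ Fin N) : Lab N m := ⟨Phi g, Phi_fiber_card g⟩

/-- assembling a family of embeddings into fibers into one embedding. -/
def assemble (f : Lab (p := p) N m)
    (e : Π i : Fin p, (Fin (m i) ↪ {s : Fin N // f.1 s = some i})) : Idx m ↪ Fin N := by
  refine ⟨fun q => (e q.1 q.2).val, ?_⟩
  rintro ⟨i, x⟩ ⟨j, y⟩ hxy
  replace hxy : ((e i) x).val = ((e j) y).val := hxy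
  have hi : f.1 ((e i) x).val = some i := (e i x).prop
  have hj : f.1 ((e j) y).val = some j := (e j y).prop
  rw [hxy, hj] at hi
  have hij : j = i := Option.some_inj.mp hi
  subst hij
  exact congrArg (Sigma.mk j) ((e j).injective (Subtype.ext hxy))

lemma assemble_spec (f : Lab (p := p) N m)
    (e : Π i : Fin p, (Fin (m i) ↪ {s : Fin N // f.1 s = some i})) :
    Phi (assemble f e) = f.1 := by
  funext s
  cases hfv : f.1 s with
  | some i =>
    rw [Phi_eq_some_iff]
    have hsurj : Function.Surjective (e i) := by
      have hcard : Fintype.card {s : Fin N // f.1 s = some i} = m i := by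
        rw [Fintype.card_subtype]
        exact f.2 i
      refine ((Fintype.bijective_iff_injective_and_card (e i)).2
        ⟨(e i).injective, by simp [hcard]⟩).2
    obtain ⟨x, hx⟩ := hsurj ⟨s, hfv⟩
    exact ⟨x, congrArg Subtype.val hx⟩
  | none =>
    cases hpv : Phi (assemble f e) s with
    | none => rfl
    | some j =>
      exfalso
      rw [Phi_eq_some_iff] at hpv
      obtain ⟨x, hx⟩ := hpv
      replace hx : ((e j) x).val = s := hx
      rw [← hx, (e j x).prop] at hfv
      exact absurd hfv (by simp)

/-- fibers of `Phi'` are products of embedding types. -/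
noncomputable def fiberEquiv (f : Lab (p := p) N m) :
    {g : Idx m ↪ Fin N // Phi' g = f}
      ≃ (Π i : Fin p, (Fin (m i) ↪ {s : Fin N // f.1 s = some i})) where
  toFun g := fun i =>
    ⟨fun x => ⟨g.1 ⟨i, x⟩, by
        have h1 : Phi g.1 (g.1 ⟨i, x⟩) = some i := (Phi_eq_some_iff _ _ _).2 ⟨x, rfl⟩
        have h2 : Phi g.1 = f.1 := congrArg Subtype.val g.2
        rw [← h2]; exact h1⟩,
      by
        intro x y hxy
        rw [Subtype.ext_iff] at hxy
        exact @sigma_mk_injective (Fin p) (fun j => Fin (m j)) i x y (g.1.injective hxy)⟩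
  invFun e := ⟨assemble f e, Subtype.ext (assemble_spec f e)⟩
  left_inv g := by
    apply Subtype.ext
    apply Function.Embedding.ext
    rintro ⟨i, x⟩
    rfl
  right_inv e := by
    funext i
    apply Function.Embedding.ext
    intro x
    apply Subtype.ext
    rfl

lemma card_lab_mul :
    Nat.card (Lab (p := p) N m) * ∏ i : Fin p, Nat.factorial (m i)
      = Nat.descFactorial N (∑ i : Fin p, m i) := by
  classical
  have h1 : Fintype.card (Idx m ↪ Fin N) = Nat.descFactorial N (∑ i : Fin p, m i) := by
    rw [Fintype.card_embedding_eq]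
    congr 1
    · simp
    · simp
  have h2 : Fintype.card (Idx m ↪ Fin N)
      = ∑ f : Lab (p := p) N m, Fintype.card {g : Idx m ↪ Fin N // Phi' g = f} := by
    rw [← Fintype.card_sigma]
    exact Fintype.card_congr (Equiv.sigmaFiberEquiv (Phi' (N := N) (m := m))).symm
  have h3 : ∀ f : Lab (p := p) N m,
      Fintype.card {g : Idx m ↪ Fin N // Phi' g = f} = ∏ i : Fin p, Nat.factorial (m i) := by
    intro f
    rw [Fintype.card_congr (fiberEquiv f), Fintype.card_pi]
    refine Finset.prod_congr rfl fun i _ => ?_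
    rw [Fintype.card_embedding_eq, Fintype.card_fin, Fintype.card_subtype, f.2 i,
      Nat.descFactorial_self]
  rw [Nat.card_eq_fintype_card, ← h1, h2]
  rw [Finset.sum_congr rfl fun f _ => h3 f, Finset.sum_const, Finset.card_univ, smul_eq_mul]

lemma card_filter_range_eq (N : ℕ) (q : ℕ → Prop) [DecidablePred q] :
    ((Finset.range N).filter q).card
      = (Finset.univ.filter (fun s : Fin N => q s.val)).card := by
  rw [Finset.card_filter, Finset.card_filter,
    ← Fin.sum_univ_eq_sum_range (fun t => if q t then 1 else 0)]

end Count
end CountAux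

/-- Counting families of pairwise disjoint subpaths in a path on `n` vertices
(vertices labeled `0, …, n-1`, edges `{a, a+1}`).  For each `i : Fin p`, we choose
`m i` subpaths of length `i+1`, each recorded by its starting (leftmost) vertex;
a subpath of length `ℓ` starting at `a` occupies the vertices `a, …, a+ℓ`. -/
theorem count_disjoint_subpaths_of_path (n p : ℕ) (hn : 1 ≤ n) (m : Fin p → ℕ)
    (hfit : ∑ i : Fin p, ((i : ℕ) + 2) * m i ≤ n) :
    Nat.card {starts : Fin p → Finset ℕ //
        (∀ i, ∀ a ∈ starts i, a + ((i : ℕ) + 1) ≤ n - 1) ∧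
        (∀ i, (starts i).card = m i) ∧
        (∀ i j, ∀ a ∈ starts i, ∀ b ∈ starts j, (i ≠ j ∨ a ≠ b) →
          Disjoint (Finset.Icc a (a + (i : ℕ) + 1)) (Finset.Icc b (b + (j : ℕ) + 1)))}
      * ∏ i : Fin p, Nat.factorial (m i) =
      Nat.descFactorial (n - ∑ i : Fin p, ((i : ℕ) + 1) * m i) (∑ i : Fin p, m i) := by
  classical
  have hWK : ∑ i : Fin p, ((i : ℕ) + 2) * m i
      = (∑ i : Fin p, ((i : ℕ) + 1) * m i) + ∑ i : Fin p, m i := by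
    rw [← Finset.sum_add_distrib]
    exact Finset.sum_congr rfl fun i _ => by ring
  have hNn : (n - ∑ i : Fin p, ((i : ℕ) + 1) * m i) + ∑ i : Fin p, ((i : ℕ) + 1) * m i
      = n := by omega
  set N := n - ∑ i : Fin p, ((i : ℕ) + 1) * m i with hN
  let HT := {f : ℕ → Option (Fin p) //
    (∀ s, N ≤ s → f s = none) ∧
    ∀ i, ((Finset.range N).filter fun s => f s = some i).card = m i}
  let L := {starts : Fin p → Finset ℕ //
        (∀ i, ∀ a ∈ starts i, a + ((i : ℕ) + 1) ≤ n - 1) ∧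
        (∀ i, (starts i).card = m i) ∧
        (∀ i j, ∀ a ∈ starts i, ∀ b ∈ starts j, (i ≠ j ∨ a ≠ b) →
          Disjoint (Finset.Icc a (a + (i : ℕ) + 1)) (Finset.Icc b (b + (j : ℕ) + 1)))}
  -- equivalence between `HT` and `Lab N m`
  let e1 : HT ≃ CountAux.Lab (p := p) N m :=
    { toFun := fun f => ⟨fun s : Fin N => f.1 s.val, by
        intro i
        rw [← CountAux.card_filter_range_eq N (fun t => f.1 t = some i)]
        exact f.2.2 i⟩
      invFun := fun g => ⟨fun t => if h : t < N then g.1 ⟨t, h⟩ else none,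
        fun s hs => dif_neg (by omega),
        by
          intro i
          rw [CountAux.card_filter_range_eq N
            (fun t => (if h : t < N then g.1 ⟨t, h⟩ else none) = some i)]
          rw [show (Finset.univ.filter (fun s : Fin N =>
              (if h : (s : ℕ) < N then g.1 ⟨(s : ℕ), h⟩ else none) = some i))
              = Finset.univ.filter (fun s : Fin N => g.1 s = some i) from
            Finset.filter_congr (fun s _ => iff_of_eq (by rw [dif_pos s.isLt, Fin.eta]))]
          exact g.2 i⟩
      left_inv := fun f => by
        apply Subtype.ext
        funext t
        show (if h : t < N then f.1 ((⟨t, h⟩ : Fin N) : ℕ) else none) = f.1 t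
        by_cases h : t < N
        · rw [dif_pos h]
        · rw [dif_neg h, f.2.1 t (by omega)]
      right_inv := fun g => by
        apply Subtype.ext
        funext s
        show (if h : (s : ℕ) < N then g.1 ⟨(s : ℕ), h⟩ else none) = g.1 s
        rw [dif_pos s.isLt, Fin.eta] }
  have hHTfin : Finite HT := Finite.of_equiv _ e1.symm
  -- contraction : L → HT
  let Cm : L → HT := fun st =>
    ⟨CountAux.ctr st.1,
     fun s hs => CountAux.ctr_none st.2.1 st.2.2.1 st.2.2.2 hn hs,
     fun i => CountAux.ctr_fiber_card st.2.1 st.2.2.1 st.2.2.2 hn i⟩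
  have hCinj : Function.Injective Cm := by
    intro st st' h
    apply Subtype.ext
    exact CountAux.ctr_injective st.2.2.2 st'.2.2.2
      (fun s => congrFun (congrArg Subtype.val h) s)
  -- expansion : HT → L
  let Em : HT → L := fun f =>
    ⟨CountAux.epand f.1 N,
      fun i => CountAux.epand_bound f.1 f.2.2 hNn i,
      fun i => CountAux.epand_card f.1 f.2.2 i,
      fun i j => CountAux.epand_disjoint f.1 i j⟩
  have hEinj : Function.Injective Em := by
    intro f g h
    apply Subtype.ext
    exact CountAux.epand_injective f.2.1 g.2.1
      (fun i => congrFun (congrArg Subtype.val h) i)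
  have hLfin : Finite L := Finite.of_injective Cm hCinj
  have hkey : Nat.card L = Nat.card (CountAux.Lab (p := p) N m) := by
    have h1 : Nat.card L ≤ Nat.card HT := Nat.card_le_card_of_injective Cm hCinj
    have h2 : Nat.card HT ≤ Nat.card L := Nat.card_le_card_of_injective Em hEinj
    have h3 : Nat.card HT = Nat.card (CountAux.Lab (p := p) N m) := Nat.card_congr e1
    omega
  show Nat.card L * ∏ i : Fin p, Nat.factorial (m i) = Nat.descFactorial N (∑ i : Fin p, m i)
  rw [hkey]
  exact CountAux.card_lab_mul
end

section
/- Let y be a Hamiltonian cycle in K_n containing the edge {s,t}, and π a partition of k with m parts, m_i parts of size i. Then the number of path subsets Γ ⊆ y of partition type π such that neither s nor t appears in any edge of Γ equals (n-2-k)_{(m)} / ∏_j m_j!. -/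
open scoped Classical

/-- `Γ` has partition type given by the list of path lengths `ks`. -/
def hasType (n M : ℕ) (ks : Fin M → ℕ) (Γ : Finset (Sym2 (Fin n))) : Prop :=
  ∃ p : ∀ j : Fin M, Fin (ks j + 1) → Fin n,
    (∀ j, Function.Injective (p j)) ∧
    (∀ j j', j ≠ j' → ∀ a b, p j a ≠ p j' b) ∧
    Γ = Finset.univ.biUnion fun j => pathEdges n (ks j) (p j)

theorem card_stab {M k : ℕ} (ks : Fin M → ℕ) (hks : ∀ j, ks j < k + 1) :
    Nat.card {τ : Equiv.Perm (Fin M) // ∀ j, ks (τ j) = ks j}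
      = ∏ i ∈ Finset.range (k + 1),
          Nat.factorial (Finset.univ.filter fun j => ks j = i).card := by
  have hbij : Function.Bijective
      (fun (τ : {τ : Equiv.Perm (Fin M) // ∀ j, ks (τ j) = ks j}) =>
        fun i : Fin (k+1) =>
          Equiv.Perm.subtypePerm τ.1 (p := fun j => ks j = (i : ℕ))
            (fun j => by beta_reduce; rw [τ.2 j])) := by
    constructor
    · intro τ τ' h
      apply Subtype.ext; apply Equiv.ext; intro j
      have := congrFun h ⟨ks j, hks j⟩
      have := congrArg (fun e => (e ⟨j, rfl⟩ : {x // ks x = ks j}).1) this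
      simpa [Equiv.Perm.subtypePerm] using this
    · intro π
      have key : ∀ (i i' : Fin (k+1)) (h : i = i') (x : Fin M) (hx : ks x = (i:ℕ))
          (hx' : ks x = (i':ℕ)),
          ((π i ⟨x, hx⟩ : {z // ks z = (i:ℕ)}) : Fin M) = ((π i' ⟨x, hx'⟩ : {z // ks z = (i':ℕ)}) : Fin M) := by
        rintro i _ rfl x hx hx'; rfl
      have hg : Function.Injective
          (fun j : Fin M => ((π ⟨ks j, hks j⟩ ⟨j, rfl⟩ : {x // ks x = ks j}) : Fin M)) := by
        intro j j' h
        have h1 : ks ((π ⟨ks j, hks j⟩ ⟨j, rfl⟩ : {x // ks x = ks j}) : Fin M) = ks j :=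
          (π ⟨ks j, hks j⟩ ⟨j, rfl⟩).2
        have h2 : ks ((π ⟨ks j', hks j'⟩ ⟨j', rfl⟩ : {x // ks x = ks j'}) : Fin M) = ks j' :=
          (π ⟨ks j', hks j'⟩ ⟨j', rfl⟩).2
        have hkk : ks j = ks j' := by rw [← h1, ← h2]; exact congrArg ks h
        simp only [] at h
        have hfin : (⟨ks j', hks j'⟩ : Fin (k+1)) = ⟨ks j, hks j⟩ := Fin.ext hkk.symm
        have h2' := key _ _ hfin j' rfl hkk.symm
        rw [h2'] at h
        have : (π ⟨ks j, hks j⟩ ⟨j, rfl⟩) = (π ⟨ks j, hks j⟩ ⟨j', hkk.symm⟩) :=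
          Subtype.ext h
        have := (π ⟨ks j, hks j⟩).injective this
        exact congrArg Subtype.val this
      have hgbij := (Finite.injective_iff_bijective).mp hg
      let g := Equiv.ofBijective _ hgbij
      have hgk : ∀ j, ks (g j) = ks j := fun j => (π ⟨ks j, hks j⟩ ⟨j, rfl⟩).2
      refine ⟨⟨g, hgk⟩, ?_⟩
      funext i
      apply Equiv.ext
      rintro ⟨j, hj⟩
      obtain ⟨iv, hiv⟩ := i
      simp only [Fin.val_mk] at hj
      subst hj
      apply Subtype.ext
      show g j = _
      show ((π ⟨ks j, hks j⟩ ⟨j, rfl⟩ : {x // ks x = ks j}) : Fin M) = _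
      rfl
  rw [Nat.card_eq_of_bijective _ hbij, Nat.card_pi]
  rw [← Fin.prod_univ_eq_prod_range (fun i => Nat.factorial (Finset.univ.filter fun j => ks j = i).card) (k+1)]
  congr 1
  funext i
  rw [Nat.card_eq_fintype_card, Fintype.card_perm]
  congr 1
  rw [Fintype.card_subtype]

variable {M : ℕ} (ks : Fin M → ℕ)

def IsPlacement (N : ℕ) {M : ℕ} (ks : Fin M → ℕ) (a : Fin M → ℕ) : Prop :=
  (∀ j, a j + ks j + 1 ≤ N) ∧
  ∀ j j', j ≠ j' → a j + ks j < a j' ∨ a j' + ks j' < a j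

/-- total length of disjoint intervals inside `[lo, hi)` -/
lemma sum_intervals_le (a : Fin M → ℕ)
    (hd : ∀ j j', j ≠ j' → a j + ks j < a j' ∨ a j' + ks j' < a j)
    (P : Finset (Fin M)) (lo hi : ℕ) (h : ∀ j ∈ P, lo ≤ a j ∧ a j + ks j < hi) :
    ∑ j ∈ P, (ks j + 1) ≤ hi - lo := by
  have hdisj : ∀ j ∈ P, ∀ j' ∈ P, j ≠ j' →
      Disjoint (Finset.Icc (a j) (a j + ks j)) (Finset.Icc (a j') (a j' + ks j'))  := by
    intro j _ j' _ hne
    rw [Finset.disjoint_left]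
    intro x hx hx'
    rw [Finset.mem_Icc] at hx hx'
    rcases hd j j' hne with h1 | h1 <;> omega
  have hsub : P.biUnion (fun j => Finset.Icc (a j) (a j + ks j)) ⊆ Finset.Ico lo hi := by
    intro x hx
    rw [Finset.mem_biUnion] at hx
    obtain ⟨j, hj, hxj⟩ := hx
    rw [Finset.mem_Icc] at hxj
    rw [Finset.mem_Ico]
    have := h j hj
    omega
  have := Finset.card_le_card hsub
  rw [Finset.card_biUnion hdisj] at this
  rw [Nat.card_Ico] at this
  calc ∑ j ∈ P, (ks j + 1) = ∑ j ∈ P, (Finset.Icc (a j) (a j + ks j)).card := by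
        apply Finset.sum_congr rfl; intro j _; rw [Nat.card_Icc]; omega
    _ ≤ hi - lo := this

section
variable (a : Fin M → ℕ)

def lowSum (j : Fin M) : ℕ := ∑ j' ∈ Finset.univ.filter (fun j' => a j' < a j), ks j'

end

section Facts
variable {N : ℕ} {a : Fin M → ℕ} (ha : IsPlacement N ks a)
include ha

lemma place_ne {j j' : Fin M} (h : j ≠ j') : a j ≠ a j' := by
  rcases ha.2 j j' h with h1 | h1 <;> omega

lemma place_lt {j j' : Fin M} (h : a j' < a j) : a j' + ks j' < a j := by
  have hne : j' ≠ j := by intro e; rw [e] at h; omega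
  rcases ha.2 j' j hne with h1 | h1 <;> omega

lemma lowSum_le : ∀ j, lowSum ks a j + (Finset.univ.filter (fun j' => a j' < a j)).card ≤ a j := by
  intro j
  have := sum_intervals_le ks a ha.2 (Finset.univ.filter (fun j' => a j' < a j)) 0 (a j)
    (by intro u hu
        rw [Finset.mem_filter] at hu
        exact ⟨Nat.zero_le _, place_lt ks ha hu.2⟩)
  rw [Finset.sum_add_distrib, Finset.sum_const, smul_eq_mul, mul_one] at this
  unfold lowSum
  omega

lemma sum_split (j : Fin M) (hsum : ∑ j', ks j' = k) :
    lowSum ks a j + ks j + ∑ j' ∈ Finset.univ.filter (fun j' => a j < a j'), ks j' = k := by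
  classical
  have hu : (Finset.univ : Finset (Fin M)) =
      (Finset.univ.filter (fun j' => a j' < a j)) ∪
      (insert j (Finset.univ.filter (fun j' => a j < a j'))) := by
    ext u
    simp only [Finset.mem_union, Finset.mem_insert, Finset.mem_filter, Finset.mem_univ,
      true_and, iff_true_intro (Finset.mem_univ u)]
    constructor
    · intro _
      rcases Nat.lt_trichotomy (a u) (a j) with h | h | h
      · left; exact h
      · right; left
        by_contra hne
        exact place_ne ks ha (Ne.symm hne) h.symm
      · right; right; exact h
    · intro _; trivial
  have hdisj : Disjoint (Finset.univ.filter (fun j' => a j' < a j))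
      (insert j (Finset.univ.filter (fun j' => a j < a j'))) := by
    rw [Finset.disjoint_left]
    intro u hu hu'
    rw [Finset.mem_filter] at hu
    rw [Finset.mem_insert] at hu'
    rcases hu' with rfl | hu'
    · omega
    · rw [Finset.mem_filter] at hu'; omega
  have hj : j ∉ Finset.univ.filter (fun j' => a j < a j') := by
    rw [Finset.mem_filter]; omega
  have key : ∑ j' ∈ ((Finset.univ.filter (fun j' => a j' < a j)) ∪
      (insert j (Finset.univ.filter (fun j' => a j < a j')))), ks j' = k := by
    rw [← hu, hsum]
  rw [Finset.sum_union hdisj, Finset.sum_insert hj] at key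
  unfold lowSum
  omega

lemma compress_lt (hsum : ∑ j', ks j' = k) (j : Fin M) :
    a j - lowSum ks a j < N - k := by
  have h1 := lowSum_le ks ha j
  have h2 := sum_split ks ha j hsum
  have h3 := sum_intervals_le ks a ha.2 (Finset.univ.filter (fun j' => a j < a j'))
    (a j + ks j + 1) N
    (by intro u hu
        rw [Finset.mem_filter] at hu
        have := place_lt ks ha (j' := j) (j := u) hu.2
        have := (ha.1 u)
        omega)
  rw [Finset.sum_add_distrib, Finset.sum_const, smul_eq_mul, mul_one] at h3
  have h4 := ha.1 j
  omega

lemma compress_strict_lt {j j' : Fin M} (h : a j' < a j) :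
    a j' - lowSum ks a j' < a j - lowSum ks a j := by
  classical
  set D := Finset.univ.filter (fun u => a j' ≤ a u ∧ a u < a j) with hD
  have hsplit : Finset.univ.filter (fun u => a u < a j) =
      (Finset.univ.filter (fun u => a u < a j')) ∪ D := by
    ext u
    simp only [hD, Finset.mem_union, Finset.mem_filter, Finset.mem_univ, true_and]
    omega
  have hdisj : Disjoint (Finset.univ.filter (fun u => a u < a j')) D := by
    rw [Finset.disjoint_left]
    intro u hu hu'
    rw [Finset.mem_filter] at hu
    rw [hD, Finset.mem_filter] at hu'
    omega
  have hSD : lowSum ks a j = lowSum ks a j' + ∑ u ∈ D, ks u := by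
    unfold lowSum
    rw [hsplit, Finset.sum_union hdisj]
  have hjD : j' ∈ D := by rw [hD, Finset.mem_filter]; exact ⟨Finset.mem_univ _, le_refl _, h⟩
  have hcard : 1 ≤ D.card := Finset.card_pos.mpr ⟨j', hjD⟩
  have hDsum : ∑ u ∈ D, (ks u + 1) ≤ a j - a j' := by
    apply sum_intervals_le ks a ha.2
    intro u hu
    rw [hD, Finset.mem_filter] at hu
    exact ⟨hu.2.1, place_lt ks ha hu.2.2⟩
  rw [Finset.sum_add_distrib, Finset.sum_const, smul_eq_mul, mul_one] at hDsum
  have h1 := lowSum_le ks ha j'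
  omega

end Facts

section Decompress
variable {b : Fin M → ℕ} (hb : Function.Injective b)

def hiSum (b : Fin M → ℕ) (j : Fin M) : ℕ :=
  ∑ j' ∈ Finset.univ.filter (fun j' => b j' < b j), ks j'

include hb
set_option linter.unusedSectionVars false

lemma decompress_lt {j j' : Fin M} (h : b j' < b j) :
    (b j' + hiSum ks b j') + ks j' < b j + hiSum ks b j := by
  classical
  set D := Finset.univ.filter (fun u => b j' < b u ∧ b u < b j) with hD
  have hsplit : Finset.univ.filter (fun u => b u < b j) =
      (Finset.univ.filter (fun u => b u < b j')) ∪ (insert j' D) := by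
    ext u
    simp only [hD, Finset.mem_union, Finset.mem_insert, Finset.mem_filter, Finset.mem_univ,
      true_and]
    constructor
    · intro hu
      rcases Nat.lt_trichotomy (b u) (b j') with h1 | h1 | h1
      · left; exact h1
      · right; left; exact hb h1
      · right; right; exact ⟨h1, hu⟩
    · intro hu
      rcases hu with h1 | rfl | h1 <;> omega
  have hdisj : Disjoint (Finset.univ.filter (fun u => b u < b j')) (insert j' D) := by
    rw [Finset.disjoint_left]
    intro u hu hu'
    rw [Finset.mem_filter] at hu
    rw [Finset.mem_insert] at hu'
    rcases hu' with rfl | hu'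
    · omega
    · rw [hD, Finset.mem_filter] at hu'; omega
  have hj : j' ∉ D := by rw [hD, Finset.mem_filter]; omega
  have : hiSum ks b j = hiSum ks b j' + (ks j' + ∑ u ∈ D, ks u) := by
    unfold hiSum
    rw [hsplit, Finset.sum_union hdisj, Finset.sum_insert hj]
  omega

lemma hiSum_add_le (k : ℕ) (hsum : ∑ j', ks j' = k) (j : Fin M) :
    hiSum ks b j + ks j ≤ k := by
  classical
  have : insert j (Finset.univ.filter (fun j' => b j' < b j)) ⊆ Finset.univ :=
    Finset.subset_univ _
  have hj : j ∉ Finset.univ.filter (fun j' => b j' < b j) := by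
    rw [Finset.mem_filter]; omega
  have := Finset.sum_le_sum_of_subset (f := ks) this
  rw [Finset.sum_insert hj, hsum] at this
  unfold hiSum
  omega

end Decompress

section EquivPart
variable {N k : ℕ}

lemma compress_order_iff {a : Fin M → ℕ} (ha : IsPlacement N ks a) (j j' : Fin M) :
    a j' - lowSum ks a j' < a j - lowSum ks a j ↔ a j' < a j := by
  constructor
  · intro h
    rcases Nat.lt_trichotomy (a j') (a j) with h1 | h1 | h1
    · exact h1
    · exfalso
      have : j' = j := by
        by_contra hne
        exact place_ne ks ha hne h1
      rw [this] at h; omega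
    · have := compress_strict_lt ks ha h1; omega
  · exact compress_strict_lt ks ha

lemma decompress_order_iff {b : Fin M → ℕ} (hb : Function.Injective b) (j j' : Fin M) :
    (b j' + hiSum ks b j') < (b j + hiSum ks b j) ↔ b j' < b j := by
  constructor
  · intro h
    rcases Nat.lt_trichotomy (b j') (b j) with h1 | h1 | h1
    · exact h1
    · exfalso; have := hb h1; rw [this] at h; omega
    · have := decompress_lt ks hb h1; omega
  · intro h; have := decompress_lt ks hb h; omega

lemma decompress_placement (hsum : ∑ j', ks j' = k) {b : Fin M → ℕ} (hb : Function.Injective b)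
    (hlt : ∀ j, b j < N - k) :
    IsPlacement N ks (fun j => b j + hiSum ks b j) := by
  constructor
  · intro j
    show b j + hiSum ks b j + ks j + 1 ≤ N
    have h1 := hiSum_add_le ks hb k hsum j
    have h2 := hlt j
    omega
  · intro j j' hne
    rcases Nat.lt_trichotomy (b j) (b j') with h1 | h1 | h1
    · left; exact decompress_lt ks hb h1
    · exact absurd (hb h1) hne
    · right; exact decompress_lt ks hb h1

noncomputable def placeEquiv (hsum : ∑ j', ks j' = k) :
    {a : Fin M → ℕ // IsPlacement N ks a} ≃ (Fin M ↪ Fin (N - k)) where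
  toFun a := ⟨fun j => ⟨a.1 j - lowSum ks a.1 j, compress_lt ks a.2 hsum j⟩, by
    intro j j' h
    simp only [Fin.mk.injEq] at h
    by_contra hne
    have hane : a.1 j ≠ a.1 j' := place_ne ks a.2 hne
    rcases Nat.lt_trichotomy (a.1 j) (a.1 j') with h1 | h1 | h1
    · have := compress_strict_lt ks a.2 h1; omega
    · exact hane h1
    · have := compress_strict_lt ks a.2 h1; omega⟩
  invFun b := ⟨fun j => (b j : ℕ) + hiSum ks (fun u => (b u : ℕ)) j,
    decompress_placement ks hsum (fun _ _ h => b.injective (Fin.ext h)) (fun j => (b j).2)⟩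
  left_inv := by
    rintro ⟨a, ha⟩
    apply Subtype.ext
    funext j
    simp only []
    set ca := fun u => a u - lowSum ks a u with hca
    have hfe : ∀ u, Finset.univ.filter (fun u' => ca u' < ca u) =
        Finset.univ.filter (fun u' => a u' < a u) := by
      intro u
      ext u'
      simp only [Finset.mem_filter, Finset.mem_univ, true_and, hca]
      exact compress_order_iff ks ha u u'
    have : hiSum ks ca j = lowSum ks a j := by
      unfold hiSum lowSum
      rw [hfe j]
    show ca j + hiSum ks ca j = a j
    rw [this]
    have := lowSum_le ks ha j
    simp only [hca]
    omega
  right_inv := by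
    intro b
    apply Function.Embedding.ext
    intro j
    apply Fin.ext
    simp only [Function.Embedding.coeFn_mk]
    set bb := fun u => ((b u : ℕ)) with hbb
    have hbinj : Function.Injective bb := fun u u' h => b.injective (Fin.ext h)
    set a := fun u => bb u + hiSum ks bb u with ha
    have hfe : ∀ u, Finset.univ.filter (fun u' => a u' < a u) =
        Finset.univ.filter (fun u' => bb u' < bb u) := by
      intro u
      ext u'
      simp only [Finset.mem_filter, Finset.mem_univ, true_and, ha]
      exact decompress_order_iff ks hbinj u u'
    show a j - lowSum ks a j = bb j
    have : lowSum ks a j = hiSum ks bb j := by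
      unfold hiSum lowSum
      rw [hfe j]
    rw [this, ha]
    simp

theorem card_placements (hsum : ∑ j', ks j' = k) :
    Nat.card {a : Fin M → ℕ // IsPlacement N ks a} = (N - k).descFactorial M := by
  rw [Nat.card_congr (placeEquiv ks hsum), Nat.card_eq_fintype_card,
    Fintype.card_embedding_eq, Fintype.card_fin, Fintype.card_fin]

end EquivPart

def fv {n : ℕ} (σ : Equiv.Perm (Fin n)) (t : Fin n) (l : ℕ) : Fin n := (σ ^ l) t

variable {n : ℕ} {σ : Equiv.Perm (Fin n)} {t s : Fin n}

lemma fv_zero : fv σ t 0 = t := rfl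

lemma fv_succ (l : ℕ) : fv σ t (l + 1) = σ (fv σ t l) := by
  unfold fv; rw [pow_succ']; rfl

lemma orderOf_eq (hσ : σ.IsCycle) (hsupp : σ.support = Finset.univ) : orderOf σ = n := by
  rw [hσ.orderOf, hsupp, Finset.card_univ, Fintype.card_fin]

lemma fv_mod (hσ : σ.IsCycle) (hsupp : σ.support = Finset.univ) (l : ℕ) :
    fv σ t (l % n) = fv σ t l := by
  unfold fv
  conv_rhs => rw [← Nat.mod_add_div l n]
  rw [pow_add, pow_mul]
  have h1 : σ ^ n = 1 := by
    have h0 := pow_orderOf_eq_one σ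
    rwa [orderOf_eq hσ hsupp] at h0
  simp [h1]

lemma fv_surj (hσ : σ.IsCycle) (hsupp : σ.support = Finset.univ) (hn : 4 ≤ n) :
    ∀ x : Fin n, ∃ l, l < n ∧ fv σ t l = x := by
  intro x
  have hne : ∀ z : Fin n, σ z ≠ z := by
    intro z
    exact Equiv.Perm.mem_support.mp (by rw [hsupp]; exact Finset.mem_univ z)
  obtain ⟨i, hi⟩ := hσ.exists_pow_eq (hne t) (hne x)
  exact ⟨i % n, Nat.mod_lt _ (by omega), by rw [fv_mod hσ hsupp]; exact hi⟩

lemma fv_inj (hσ : σ.IsCycle) (hsupp : σ.support = Finset.univ) (hn : 4 ≤ n)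
    {l l' : ℕ} (hl : l < n) (hl' : l' < n) (h : fv σ t l = fv σ t l') : l = l' := by
  have hbij : Function.Bijective (fun i : Fin n => fv σ t (i : ℕ)) := by
    apply Finite.surjective_iff_bijective.mp
    intro x
    obtain ⟨l, hln, hl⟩ := fv_surj hσ hsupp hn (t := t) x
    exact ⟨⟨l, hln⟩, hl⟩
  have h2 : (⟨l, hl⟩ : Fin n) = ⟨l', hl'⟩ := hbij.1 h
  exact congrArg Fin.val h2

lemma fv_last (hσ : σ.IsCycle) (hsupp : σ.support = Finset.univ) (hn : 4 ≤ n)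
    (hσs : σ s = t) : fv σ t (n - 1) = s := by
  apply σ.injective
  rw [hσs, ← fv_succ]
  have h1 : n - 1 + 1 = n := by omega
  rw [h1, ← fv_mod hσ hsupp, Nat.mod_self, fv_zero]

lemma mem_y_iff (hσ : σ.IsCycle) (hsupp : σ.support = Finset.univ) (hn : 4 ≤ n)
    {y : Finset (Sym2 (Fin n))}
    (hy : y = Finset.image (fun i => s(i, σ i)) Finset.univ) (e : Sym2 (Fin n)) :
    e ∈ y ↔ ∃ l, l < n ∧ e = s(fv σ t l, fv σ t (l + 1)) := by
  rw [hy, Finset.mem_image]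
  constructor
  · rintro ⟨i, -, rfl⟩
    obtain ⟨l, hln, hl⟩ := fv_surj hσ hsupp hn (t := t) i
    exact ⟨l, hln, by rw [← hl, fv_succ]⟩
  · rintro ⟨l, hln, rfl⟩
    exact ⟨fv σ t l, Finset.mem_univ _, by rw [fv_succ]⟩

lemma fv_avoid (hσ : σ.IsCycle) (hsupp : σ.support = Finset.univ) (hn : 4 ≤ n)
    (hσs : σ s = t) {l : ℕ} (h1 : 1 ≤ l) (h2 : l ≤ n - 2) :
    fv σ t l ≠ s ∧ fv σ t l ≠ t := by
  constructor
  · intro h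
    rw [← fv_last hσ hsupp hn hσs] at h
    have := fv_inj hσ hsupp hn (by omega) (by omega) h
    omega
  · intro h
    have h' : fv σ t l = fv σ t 0 := by rw [fv_zero]; exact h
    have := fv_inj hσ hsupp hn (by omega) (by omega) h'
    omega

lemma edge_eq_iff (hσ : σ.IsCycle) (hsupp : σ.support = Finset.univ) (hn : 4 ≤ n)
    {l l' : ℕ} (hl : l + 1 < n) (hl' : l' + 1 < n) :
    s(fv σ t l, fv σ t (l + 1)) = s(fv σ t l', fv σ t (l' + 1)) ↔ l = l' := by
  constructor
  · intro h
    rw [Sym2.eq_iff] at h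
    rcases h with ⟨h1, -⟩ | ⟨h1, h2⟩
    · exact fv_inj hσ hsupp hn (by omega) (by omega) h1
    · have e1 := fv_inj hσ hsupp hn (by omega) (by omega) h1
      have e2 := fv_inj hσ hsupp hn (by omega) (by omega) h2
      omega
  · rintro rfl; rfl

lemma edge_avoid_iff (hσ : σ.IsCycle) (hsupp : σ.support = Finset.univ) (hn : 4 ≤ n)
    (hσs : σ s = t) {y : Finset (Sym2 (Fin n))}
    (hy : y = Finset.image (fun i => s(i, σ i)) Finset.univ) (e : Sym2 (Fin n)) :
    (e ∈ y ∧ s ∉ e ∧ t ∉ e) ↔ ∃ x, x + 4 ≤ n ∧ e = s(fv σ t (x + 1), fv σ t (x + 2)) := by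
  constructor
  · rintro ⟨hey, hs, ht⟩
    obtain ⟨l, hln, rfl⟩ := (mem_y_iff (t := t) hσ hsupp hn hy e).mp hey
    rw [Sym2.mem_iff] at hs ht
    push_neg at hs ht
    have hl0 : l ≠ 0 := by
      intro h; subst h; exact ht.1 fv_zero.symm
    have hl1 : l + 1 ≠ n := by
      intro h
      apply ht.2
      rw [← fv_mod hσ hsupp, h, Nat.mod_self, fv_zero]
    have hl2 : l + 1 ≠ n - 1 := by
      intro h
      apply hs.2
      rw [h, fv_last hσ hsupp hn hσs]
    have hl3 : l ≠ n - 1 := by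
      intro h
      apply hs.1
      rw [h, fv_last hσ hsupp hn hσs]
    refine ⟨l - 1, by omega, ?_⟩
    have e1 : l - 1 + 1 = l := by omega
    have e2 : l - 1 + 2 = l + 1 := by omega
    rw [e1, e2]
  · rintro ⟨x, hx, rfl⟩
    have hmem : s(fv σ t (x+1), fv σ t (x+2)) ∈ y := by
      rw [mem_y_iff (t := t) hσ hsupp hn hy]
      exact ⟨x + 1, by omega, rfl⟩
    refine ⟨hmem, ?_, ?_⟩
    · rw [Sym2.mem_iff]
      push_neg
      exact ⟨fun h => (fv_avoid hσ hsupp hn hσs (l := x+1) (by omega) (by omega)).1 h.symm,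
        fun h => (fv_avoid hσ hsupp hn hσs (l := x+2) (by omega) (by omega)).1 h.symm⟩
    · rw [Sym2.mem_iff]
      push_neg
      exact ⟨fun h => (fv_avoid hσ hsupp hn hσs (l := x+1) (by omega) (by omega)).2 h.symm,
        fun h => (fv_avoid hσ hsupp hn hσs (l := x+2) (by omega) (by omega)).2 h.symm⟩
section PartC

variable {n M : ℕ} (ks : Fin M → ℕ) (σ : Equiv.Perm (Fin n)) (t s : Fin n)

def Psi (a : Fin M → ℕ) : Finset (Sym2 (Fin n)) :=
  Finset.univ.biUnion fun j => pathEdges n (ks j) (fun i => fv σ t (a j + 1 + ↑i))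

lemma mem_Psi (a : Fin M → ℕ) (e : Sym2 (Fin n)) :
    e ∈ Psi ks σ t a ↔
      ∃ j, ∃ i, i < ks j ∧ e = s(fv σ t (a j + 1 + i), fv σ t (a j + 2 + i)) := by
  unfold Psi pathEdges
  rw [Finset.mem_biUnion]
  constructor
  · rintro ⟨j, -, h⟩
    rw [Finset.mem_image] at h
    obtain ⟨i, -, h⟩ := h
    refine ⟨j, ↑i, i.isLt, ?_⟩
    rw [← h]
    simp only [Fin.coe_castSucc, Fin.val_succ]
    have e1 : a j + 1 + (↑i + 1) = a j + 2 + ↑i := by omega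
    rw [e1]
  · rintro ⟨j, i, hi, rfl⟩
    refine ⟨j, Finset.mem_univ _, ?_⟩
    rw [Finset.mem_image]
    refine ⟨⟨i, hi⟩, Finset.mem_univ _, ?_⟩
    simp only [Fin.coe_castSucc, Fin.val_succ]
    have e1 : a j + 1 + (i + 1) = a j + 2 + i := by omega
    rw [e1]

variable {σ t s}
variable (hσ : σ.IsCycle) (hsupp : σ.support = Finset.univ) (hn : 4 ≤ n) (hσs : σ s = t)
  {y : Finset (Sym2 (Fin n))} (hy : y = Finset.image (fun i => s(i, σ i)) Finset.univ)

set_option maxHeartbeats 1000000 in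
include hσ hsupp hn hσs hy in
lemma Psi_mem_good {a : Fin M → ℕ} (ha : IsPlacement (n - 2) ks a) :
    Psi ks σ t a ⊆ y ∧ hasType n M ks (Psi ks σ t a) ∧
      ∀ e ∈ Psi ks σ t a, s ∉ e ∧ t ∉ e := by
  have hedge : ∀ e ∈ Psi ks σ t a, e ∈ y ∧ s ∉ e ∧ t ∉ e := by
    intro e he
    rw [mem_Psi] at he
    obtain ⟨j, i, hi, rfl⟩ := he
    rw [edge_avoid_iff hσ hsupp hn hσs hy]
    have hb := ha.1 j
    refine ⟨a j + i, by omega, ?_⟩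
    have e1 : a j + i + 1 = a j + 1 + i := by omega
    have e2 : a j + i + 2 = a j + 2 + i := by omega
    rw [e1, e2]
  refine ⟨fun e he => (hedge e he).1, ?_, fun e he => (hedge e he).2⟩
  refine ⟨fun j => fun i => fv σ t (a j + 1 + ↑i), ?_, ?_, ?_⟩
  · intro j i i' hii
    have hb := ha.1 j
    have h1 : a j + 1 + ↑i = a j + 1 + ↑i' :=
      fv_inj hσ hsupp hn (by have := i.isLt; omega) (by have := i'.isLt; omega) hii
    exact Fin.ext (by omega)
  · intro j j' hjj i i' hii
    have hb := ha.1 j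
    have hb' := ha.1 j'
    have h1 : a j + 1 + ↑i = a j' + 1 + ↑i' :=
      fv_inj hσ hsupp hn (by have := i.isLt; omega) (by have := i'.isLt; omega) hii
    have hd := ha.2 j j' hjj
    have := i.isLt
    have := i'.isLt
    omega
  · rfl

include hσ hsupp hn in
lemma idx_mem {a : Fin M → ℕ} (ha : IsPlacement (n - 2) ks a) (x : ℕ) (hx4 : x + 4 ≤ n) :
    (s(fv σ t (x + 1), fv σ t (x + 2)) ∈ Psi ks σ t a) ↔ ∃ j, a j ≤ x ∧ x < a j + ks j := by
  rw [mem_Psi]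
  constructor
  · rintro ⟨j, i, hi, he⟩
    have hb := ha.1 j
    have e2 : (x:ℕ) + 2 = (x + 1) + 1 := by omega
    have e3 : a j + 2 + i = (a j + 1 + i) + 1 := by omega
    rw [e2, e3] at he
    have := (edge_eq_iff hσ hsupp hn (l := x + 1) (l' := a j + 1 + i)
      (by omega) (by omega)).mp he
    exact ⟨j, by omega, by omega⟩
  · rintro ⟨j, hj1, hj2⟩
    refine ⟨j, x - a j, by omega, ?_⟩
    have e1 : a j + 1 + (x - a j) = x + 1 := by omega
    have e2 : a j + 2 + (x - a j) = x + 2 := by omega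
    rw [e1, e2]

include hσ hsupp hn in
lemma psi_recover {a a' : Fin M → ℕ} (ha : IsPlacement (n - 2) ks a)
    (ha' : IsPlacement (n - 2) ks a') (hks : ∀ j, 1 ≤ ks j)
    (h : Psi ks σ t a = Psi ks σ t a') (j : Fin M) :
    ∃ j', a' j' = a j ∧ ks j' = ks j := by
  have hidx : ∀ x, x + 4 ≤ n →
      ((∃ u, a u ≤ x ∧ x < a u + ks u) ↔ (∃ u, a' u ≤ x ∧ x < a' u + ks u)) := by
    intro x hx
    rw [← idx_mem ks hσ hsupp hn ha x hx, ← idx_mem ks hσ hsupp hn ha' x hx, h]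
  have hbj := ha.1 j
  have hksj := hks j
  -- a j is in idx of a'
  obtain ⟨j', hj'1, hj'2⟩ := (hidx (a j) (by omega)).mp ⟨j, le_refl _, by omega⟩
  have hbj' := ha'.1 j'
  -- claim a' j' = a j
  have hstart : a' j' = a j := by
    by_contra hne
    have hlt : a' j' < a j := by omega
    have hx : a j - 1 + 4 ≤ n := by omega
    obtain ⟨u, hu1, hu2⟩ := (hidx (a j - 1) (by omega)).mpr
      ⟨j', by omega, by omega⟩
    have hune : u ≠ j := by
      intro e; subst e; omega
    rcases ha.2 u j hune with h1 | h1 <;> omega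
  -- a j + ks j not in idx a
  have hend : ¬ ∃ u, a u ≤ a j + ks j ∧ a j + ks j < a u + ks u := by
    rintro ⟨u, hu1, hu2⟩
    have hune : u ≠ j := by intro e; subst e; omega
    rcases ha.2 u j hune with h1 | h1 <;> omega
  have hend' : ¬ ∃ u, a' u ≤ a' j' + ks j' ∧ a' j' + ks j' < a' u + ks u := by
    rintro ⟨u, hu1, hu2⟩
    have hune : u ≠ j' := by intro e; subst e; omega
    rcases ha'.2 u j' hune with h1 | h1 <;> omega
  refine ⟨j', hstart, ?_⟩
  by_contra hne
  rcases Nat.lt_trichotomy (ks j') (ks j) with h1 | h1 | h1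
  · -- a' j' + ks j' ∈ idx a but not idx a'
    apply hend'
    apply (hidx (a' j' + ks j') (by omega)).mp
    exact ⟨j, by omega, by omega⟩
  · exact hne h1
  · apply hend
    apply (hidx (a j + ks j) (by omega)).mpr
    exact ⟨j', by omega, by omega⟩

end PartC
lemma steps_mono (ℓ : ℕ) (q : ℕ → ℕ)
    (hstep : ∀ i, i < ℓ → q (i + 1) = q i + 1 ∨ q i = q (i + 1) + 1)
    (hinj : ∀ i, i ≤ ℓ → ∀ i', i' ≤ ℓ → q i = q i' → i = i') :
    (∀ i, i ≤ ℓ → q i = q 0 + i) ∨ (∀ i, i ≤ ℓ → q i + i = q 0) := by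
  rcases Nat.eq_zero_or_pos ℓ with rfl | hpos
  · left; intro i hi; interval_cases i; omega
  rcases hstep 0 hpos with h0 | h0
  · left
    intro i
    induction i using Nat.strong_induction_on with
    | _ i IH =>
      intro hi
      match i with
      | 0 => omega
      | 1 =>
        have h0' : q 1 = q 0 + 1 := h0
        omega
      | (m + 2) =>
        have ih1 := IH (m + 1) (by omega) (by omega)
        have ih0 := IH m (by omega) (by omega)
        rcases hstep (m + 1) (by omega) with h | h
        · have h' : q (m + 2) = q (m + 1) + 1 := h
          omega
        · exfalso
          have h' : q (m + 1) = q (m + 2) + 1 := h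
          have heq : q (m + 2) = q m := by omega
          have := hinj (m + 2) (by omega) m (by omega) heq
          omega
  · right
    intro i
    induction i using Nat.strong_induction_on with
    | _ i IH =>
      intro hi
      match i with
      | 0 => omega
      | 1 =>
        have h0' : q 0 = q 1 + 1 := h0
        omega
      | (m + 2) =>
        have ih1 := IH (m + 1) (by omega) (by omega)
        have ih0 := IH m (by omega) (by omega)
        rcases hstep (m + 1) (by omega) with h | h
        · exfalso
          have h' : q (m + 2) = q (m + 1) + 1 := h
          have heq : q (m + 2) = q m := by omega
          have := hinj (m + 2) (by omega) m (by omega) heq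
          omega
        · have h' : q (m + 1) = q (m + 2) + 1 := h
          omega

lemma mem_pathEdges {n ℓ : ℕ} (p : Fin (ℓ + 1) → Fin n) (e : Sym2 (Fin n)) :
    e ∈ pathEdges n ℓ p ↔ ∃ i : Fin ℓ, e = s(p i.castSucc, p i.succ) := by
  unfold pathEdges
  rw [Finset.mem_image]
  constructor
  · rintro ⟨i, -, rfl⟩; exact ⟨i, rfl⟩
  · rintro ⟨i, rfl⟩; exact ⟨i, Finset.mem_univ _, rfl⟩

section Straighten

variable {n : ℕ} {σ : Equiv.Perm (Fin n)} {t s : Fin n}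
variable (hσ : σ.IsCycle) (hsupp : σ.support = Finset.univ) (hn : 4 ≤ n) (hσs : σ s = t)
  {y : Finset (Sym2 (Fin n))} (hy : y = Finset.image (fun i => s(i, σ i)) Finset.univ)

include hσ hsupp hn hσs hy in
lemma straighten {ℓ : ℕ} (hℓ : 1 ≤ ℓ) (p : Fin (ℓ + 1) → Fin n)
    (hpinj : Function.Injective p)
    (hedges : ∀ e ∈ pathEdges n ℓ p, e ∈ y ∧ s ∉ e ∧ t ∉ e) :
    ∃ st, 1 ≤ st ∧ st + ℓ ≤ n - 2 ∧
      (∀ x : Fin n, (∃ i, p i = x) ↔ (∃ l, st ≤ l ∧ l ≤ st + ℓ ∧ x = fv σ t l)) ∧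
      pathEdges n ℓ p = pathEdges n ℓ (fun i => fv σ t (st + ↑i)) := by
  -- the index function
  have hLex : ∀ v : Fin n, ∃ l, l < n ∧ fv σ t l = v := fv_surj hσ hsupp hn
  set L : Fin n → ℕ := fun v => (hLex v).choose with hL
  have hL1 : ∀ v, L v < n := fun v => (hLex v).choose_spec.1
  have hL2 : ∀ v, fv σ t (L v) = v := fun v => (hLex v).choose_spec.2
  -- every vertex avoids s and t
  have hvert : ∀ i : Fin (ℓ + 1), p i ≠ s ∧ p i ≠ t := by
    intro i
    rcases Nat.lt_or_ge (i : ℕ) ℓ with hi | hi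
    · have hmem : s(p (Fin.castSucc ⟨(i : ℕ), hi⟩), p (Fin.succ ⟨(i : ℕ), hi⟩)) ∈ pathEdges n ℓ p :=
        (mem_pathEdges p _).mpr ⟨⟨(i : ℕ), hi⟩, rfl⟩
      have hpc : Fin.castSucc ⟨(i : ℕ), hi⟩ = i := by apply Fin.ext; simp
      obtain ⟨-, hs, ht⟩ := hedges _ hmem
      rw [Sym2.mem_iff] at hs ht
      push_neg at hs ht
      rw [hpc] at hs ht
      exact ⟨fun h => hs.1 h.symm, fun h => ht.1 h.symm⟩
    · have hieq : (i : ℕ) = ℓ := by have := i.isLt; omega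
      have hmem : s(p (Fin.castSucc ⟨ℓ - 1, by omega⟩), p (Fin.succ ⟨ℓ - 1, by omega⟩)) ∈
          pathEdges n ℓ p := (mem_pathEdges p _).mpr ⟨⟨ℓ - 1, by omega⟩, rfl⟩
      have hpc : Fin.succ ⟨ℓ - 1, by omega⟩ = i := by apply Fin.ext; simp; omega
      obtain ⟨-, hs, ht⟩ := hedges _ hmem
      rw [Sym2.mem_iff] at hs ht
      push_neg at hs ht
      rw [hpc] at hs ht
      exact ⟨fun h => hs.2 h.symm, fun h => ht.2 h.symm⟩
  -- index bounds for vertices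
  have hLbd : ∀ i : Fin (ℓ + 1), 1 ≤ L (p i) ∧ L (p i) ≤ n - 2 := by
    intro i
    constructor
    · rcases Nat.eq_zero_or_pos (L (p i)) with h | h
      · exfalso
        apply (hvert i).2
        rw [← hL2 (p i), h, fv_zero]
      · exact h
    · rcases Nat.lt_or_ge (L (p i)) (n - 1) with h | h
      · omega
      · exfalso
        apply (hvert i).1
        have : L (p i) = n - 1 := by have := hL1 (p i); omega
        rw [← hL2 (p i), this, fv_last hσ hsupp hn hσs]
  -- the nat-valued index path
  set q : ℕ → ℕ := fun i => L (p ⟨min i ℓ, by omega⟩) with hq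
  have hqpn : ∀ (i : ℕ) (hi : i ≤ ℓ), q i = L (p ⟨i, by omega⟩) := by
    intro i hi
    have h1 : (⟨min i ℓ, by omega⟩ : Fin (ℓ + 1)) = ⟨i, by omega⟩ := by
      apply Fin.ext; simp; omega
    rw [hq]; simp only []; rw [h1]
  have hqp : ∀ i : Fin (ℓ + 1), q (i : ℕ) = L (p i) := by
    intro i
    have h1 := hqpn (i : ℕ) (by have := i.isLt; omega)
    have h2 : (⟨(i : ℕ), by have := i.isLt; omega⟩ : Fin (ℓ + 1)) = i := by
      apply Fin.ext; simp
    rw [h1, h2]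
  have hqbd : ∀ i, i ≤ ℓ → 1 ≤ q i ∧ q i ≤ n - 2 := by
    intro i hi
    rw [hqpn i hi]
    exact hLbd _
  have hstep : ∀ i, i < ℓ → q (i + 1) = q i + 1 ∨ q i = q (i + 1) + 1 := by
    intro i hi
    have hmem : s(p (Fin.castSucc ⟨i, hi⟩), p (Fin.succ ⟨i, hi⟩)) ∈ pathEdges n ℓ p :=
      (mem_pathEdges p _).mpr ⟨⟨i, hi⟩, rfl⟩
    have h3 := hedges _ hmem
    rw [edge_avoid_iff hσ hsupp hn hσs hy] at h3
    obtain ⟨x, hx4, hxe⟩ := h3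
    rw [Sym2.eq_iff] at hxe
    have hqc : q i = L (p (Fin.castSucc ⟨i, hi⟩)) := by
      have := hqp (Fin.castSucc ⟨i, hi⟩)
      simpa using this
    have hqs : q (i + 1) = L (p (Fin.succ ⟨i, hi⟩)) := by
      have := hqp (Fin.succ ⟨i, hi⟩)
      simpa using this
    have hLeq : ∀ (v : Fin n) (m : ℕ), m < n → v = fv σ t m → L v = m := by
      intro v m hm hvm
      apply fv_inj hσ hsupp hn (hL1 v) hm
      rw [hL2 v, hvm]
    rcases hxe with ⟨h1, h2⟩ | ⟨h1, h2⟩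
    · left
      rw [hqc, hqs, hLeq _ _ (by omega) h1, hLeq _ _ (by omega) h2]
    · right
      rw [hqc, hqs, hLeq _ _ (by omega) h1, hLeq _ _ (by omega) h2]
  have hinj : ∀ i, i ≤ ℓ → ∀ i', i' ≤ ℓ → q i = q i' → i = i' := by
    intro i hi i' hi' h
    rw [hqpn i hi, hqpn i' hi'] at h
    have hpe : p ⟨i, by omega⟩ = p ⟨i', by omega⟩ := by
      rw [← hL2 (p ⟨i, by omega⟩), ← hL2 (p ⟨i', by omega⟩), h]
    exact congrArg Fin.val (hpinj hpe)
  have hpfv : ∀ i : Fin (ℓ + 1), p i = fv σ t (q (i : ℕ)) := by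
    intro i
    rw [hqp i, hL2]
  rcases steps_mono ℓ q hstep hinj with hmono | hmono
  · -- ascending
    refine ⟨q 0, (hqbd 0 (by omega)).1, ?_, ?_, ?_⟩
    · have := hqbd ℓ (le_refl _)
      have := hmono ℓ (le_refl _)
      omega
    · intro x
      constructor
      · rintro ⟨i, rfl⟩
        refine ⟨q 0 + (i : ℕ), by omega, by have := i.isLt; omega, ?_⟩
        rw [hpfv i, hmono (i : ℕ) (by have := i.isLt; omega)]
      · rintro ⟨l, hl1, hl2, rfl⟩
        refine ⟨⟨l - q 0, by omega⟩, ?_⟩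
        rw [hpfv ⟨l - q 0, by omega⟩, hmono (l - q 0) (by omega)]
        congr 1
        omega
    · have hfun : p = fun i : Fin (ℓ + 1) => fv σ t (q 0 + (i : ℕ)) := by
        funext i
        rw [hpfv i, hmono (i : ℕ) (by have := i.isLt; omega)]
      rw [hfun]
  · -- descending
    have hq0 : ℓ ≤ q 0 ∧ 1 ≤ q 0 - ℓ ∧ q 0 ≤ n - 2 := by
      have h1 := hmono ℓ (le_refl _)
      have h2 := hqbd ℓ (le_refl _)
      have h3 := hqbd 0 (by omega)
      omega
    refine ⟨q 0 - ℓ, hq0.2.1, by omega, ?_, ?_⟩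
    · intro x
      constructor
      · rintro ⟨i, rfl⟩
        refine ⟨q 0 - (i : ℕ), by have := i.isLt; omega, by omega, ?_⟩
        rw [hpfv i]
        congr 1
        have := hmono (i : ℕ) (by have := i.isLt; omega)
        omega
      · rintro ⟨l, hl1, hl2, rfl⟩
        refine ⟨⟨q 0 - l, by omega⟩, ?_⟩
        have e1 := hmono (q 0 - l) (by omega)
        have e2 : q (q 0 - l) = l := by omega
        rw [hpfv ⟨q 0 - l, by omega⟩, e2]
    · have hkey : ∀ (w : Fin ℓ) (m : ℕ), m = ℓ - 1 - (w : ℕ) →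
          s(p (Fin.castSucc w), p (Fin.succ w)) =
            s(fv σ t ((q 0 - ℓ) + m), fv σ t ((q 0 - ℓ) + m + 1)) := by
        intro w m hm
        have hwl := w.isLt
        have hc := hpfv (Fin.castSucc w)
        have hs' := hpfv (Fin.succ w)
        rw [Fin.coe_castSucc] at hc
        rw [Fin.val_succ] at hs'
        rw [hc, hs']
        have h1 := hmono (w : ℕ) (by omega)
        have h2 := hmono ((w : ℕ) + 1) (by omega)
        have e2 : q (w : ℕ) = (q 0 - ℓ) + m + 1 := by omega
        have e3 : q ((w : ℕ) + 1) = (q 0 - ℓ) + m := by omega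
        rw [e2, e3]
        exact Sym2.eq_swap
      apply Finset.ext
      intro e
      rw [mem_pathEdges, mem_pathEdges]
      constructor
      · rintro ⟨w, rfl⟩
        have hwl := w.isLt
        exact ⟨⟨ℓ - 1 - (w : ℕ), by omega⟩, hkey w (ℓ - 1 - (w : ℕ)) rfl⟩
      · rintro ⟨w, rfl⟩
        have hwl := w.isLt
        refine ⟨⟨ℓ - 1 - (w : ℕ), by omega⟩, ?_⟩
        exact (hkey ⟨ℓ - 1 - (w : ℕ), by omega⟩ (w : ℕ) (by simp; omega)).symm

end Straighten
section Assembly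

variable {n M : ℕ} (ks : Fin M → ℕ) {σ : Equiv.Perm (Fin n)} {t s : Fin n}
variable (hσ : σ.IsCycle) (hsupp : σ.support = Finset.univ) (hn : 4 ≤ n) (hσs : σ s = t)
  {y : Finset (Sym2 (Fin n))} (hy : y = Finset.image (fun i => s(i, σ i)) Finset.univ)

lemma placement_comp {N : ℕ} {a : Fin M → ℕ} (ha : IsPlacement N ks a)
    (τ : Equiv.Perm (Fin M)) (hτ : ∀ j, ks (τ j) = ks j) :
    IsPlacement N ks (a ∘ τ) := by
  constructor
  · intro j
    have := ha.1 (τ j)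
    rw [hτ j] at this
    exact this
  · intro j j' hjj
    have hτne : τ j ≠ τ j' := fun h => hjj (τ.injective h)
    have := ha.2 (τ j) (τ j') hτne
    rw [hτ j, hτ j'] at this
    exact this

lemma Psi_comp (a : Fin M → ℕ) (τ : Equiv.Perm (Fin M)) (hτ : ∀ j, ks (τ j) = ks j) :
    Psi ks σ t (a ∘ τ) = Psi ks σ t a := by
  apply Finset.ext
  intro e
  rw [mem_Psi, mem_Psi]
  constructor
  · rintro ⟨j, i, hi, rfl⟩
    exact ⟨τ j, i, by rw [hτ j]; exact hi, rfl⟩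
  · rintro ⟨j, i, hi, rfl⟩
    refine ⟨τ.symm j, i, ?_, ?_⟩
    · have := hτ (τ.symm j)
      rw [Equiv.apply_symm_apply] at this
      rw [← this]
      exact hi
    · show _ = s(fv σ t (a (τ (τ.symm j)) + 1 + i), fv σ t (a (τ (τ.symm j)) + 2 + i))
      rw [Equiv.apply_symm_apply]

include hσ hsupp hn hσs hy in
lemma Psi_surj (hks : ∀ j, 1 ≤ ks j) {Γ : Finset (Sym2 (Fin n))}
    (hGy : Γ ⊆ y) (hGt : hasType n M ks Γ) (hGav : ∀ e ∈ Γ, s ∉ e ∧ t ∉ e) :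
    ∃ a, IsPlacement (n - 2) ks a ∧ Psi ks σ t a = Γ := by
  obtain ⟨p, hpinj, hpdisj, hΓ⟩ := hGt
  have hsub : ∀ j, ∀ e ∈ pathEdges n (ks j) (p j), e ∈ y ∧ s ∉ e ∧ t ∉ e := by
    intro j e he
    have heΓ : e ∈ Γ := by
      rw [hΓ]; exact Finset.mem_biUnion.mpr ⟨j, Finset.mem_univ _, he⟩
    exact ⟨hGy heΓ, hGav e heΓ⟩
  choose st hst1 hst2 hvert hpe using fun j =>
    straighten hσ hsupp hn hσs hy (hks j) (p j) (hpinj j) (hsub j)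
  refine ⟨fun j => st j - 1, ⟨?_, ?_⟩, ?_⟩
  · intro j
    show st j - 1 + ks j + 1 ≤ n - 2
    have h1 := hst1 j
    have h2 := hst2 j
    omega
  · intro j j' hjj
    by_contra hcon
    push_neg at hcon
    obtain ⟨hc1, hc2⟩ := hcon
    have h1 := hst1 j
    have h1' := hst1 j'
    set x := max (st j) (st j') with hx
    have hbj : st j ≤ x ∧ x ≤ st j + ks j := by omega
    have hbj' : st j' ≤ x ∧ x ≤ st j' + ks j' := by omega
    obtain ⟨i, hi⟩ := ((hvert j) (fv σ t x)).mpr ⟨x, hbj.1, hbj.2, rfl⟩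
    obtain ⟨i', hi'⟩ := ((hvert j') (fv σ t x)).mpr ⟨x, hbj'.1, hbj'.2, rfl⟩
    exact hpdisj j j' hjj i i' (hi.trans hi'.symm)
  · rw [hΓ]
    unfold Psi
    apply Finset.biUnion_congr rfl
    intro j _
    have hstj := hst1 j
    have hfun : (fun i : Fin (ks j + 1) => fv σ t ((st j - 1) + 1 + (i : ℕ))) =
        fun i : Fin (ks j + 1) => fv σ t (st j + (i : ℕ)) := by
      funext i
      congr 1
      omega
    show pathEdges n (ks j) (fun i => fv σ t ((st j - 1) + 1 + (i : ℕ))) = _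
    rw [hfun, ← hpe j]

include hσ hsupp hn hσs hy in
lemma master {k : ℕ} (hks : ∀ j, 1 ≤ ks j) (hsum : ∑ j, ks j = k) :
    Nat.card {Γ : Finset (Sym2 (Fin n)) // Γ ⊆ y ∧ hasType n M ks Γ ∧
        ∀ e ∈ Γ, s ∉ e ∧ t ∉ e}
      * Nat.card {τ : Equiv.Perm (Fin M) // ∀ j, ks (τ j) = ks j}
      = Nat.descFactorial (n - 2 - k) M := by
  classical
  have hrep : ∀ Γ : {Γ : Finset (Sym2 (Fin n)) // Γ ⊆ y ∧ hasType n M ks Γ ∧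
      ∀ e ∈ Γ, s ∉ e ∧ t ∉ e}, ∃ a, IsPlacement (n - 2) ks a ∧ Psi ks σ t a = Γ.1 :=
    fun Γ => Psi_surj ks hσ hsupp hn hσs hy hks Γ.2.1 Γ.2.2.1 Γ.2.2.2
  choose rep hrep1 hrep2 using hrep
  have hmap : ∀ (z : {Γ : Finset (Sym2 (Fin n)) // Γ ⊆ y ∧ hasType n M ks Γ ∧
      ∀ e ∈ Γ, s ∉ e ∧ t ∉ e} × {τ : Equiv.Perm (Fin M) // ∀ j, ks (τ j) = ks j}),
      IsPlacement (n - 2) ks (rep z.1 ∘ z.2.1) :=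
    fun z => placement_comp ks (hrep1 z.1) z.2.1 z.2.2
  have hbij : Function.Bijective (fun z : {Γ : Finset (Sym2 (Fin n)) // Γ ⊆ y ∧
      hasType n M ks Γ ∧ ∀ e ∈ Γ, s ∉ e ∧ t ∉ e} ×
      {τ : Equiv.Perm (Fin M) // ∀ j, ks (τ j) = ks j} =>
      (⟨rep z.1 ∘ z.2.1, hmap z⟩ : {a : Fin M → ℕ // IsPlacement (n - 2) ks a})) := by
    constructor
    · rintro ⟨Γ, τ⟩ ⟨Γ', τ'⟩ h
      rw [Subtype.ext_iff] at h
      simp only [] at h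
      have hΨ : Γ.1 = Γ'.1 := by
        rw [← hrep2 Γ, ← hrep2 Γ', ← Psi_comp ks (rep Γ) τ.1 τ.2,
          ← Psi_comp ks (rep Γ') τ'.1 τ'.2, h]
      have hΓeq : Γ = Γ' := Subtype.ext hΨ
      subst hΓeq
      have hτ : τ.1 = τ'.1 := by
        apply Equiv.ext
        intro j
        have hj := congrFun h j
        simp only [Function.comp] at hj
        by_contra hne
        exact place_ne ks (hrep1 Γ) (fun hc => hne (by rw [hc])) hj
      exact Prod.ext rfl (Subtype.ext hτ)
    · rintro ⟨b, hb⟩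
      have hgood := Psi_mem_good ks hσ hsupp hn hσs hy hb
      set Γ : {Γ : Finset (Sym2 (Fin n)) // Γ ⊆ y ∧ hasType n M ks Γ ∧
          ∀ e ∈ Γ, s ∉ e ∧ t ∉ e} := ⟨Psi ks σ t b, hgood⟩ with hΓdef
      have hΨeq : Psi ks σ t b = Psi ks σ t (rep Γ) := by
        rw [hrep2 Γ]
      have hrec := psi_recover ks hσ hsupp hn hb (hrep1 Γ) hks hΨeq
      choose g hg1 hg2 using hrec
      have hginj : Function.Injective g := by
        intro j j' h
        have e1 := hg1 j
        have e2 := hg1 j'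
        rw [h] at e1
        by_contra hne
        exact place_ne ks hb hne (by rw [← e1, ← e2])
      have hgbij := Finite.injective_iff_bijective.mp hginj
      refine ⟨⟨Γ, ⟨Equiv.ofBijective g hgbij, hg2⟩⟩, ?_⟩
      apply Subtype.ext
      funext j
      show rep Γ (g j) = b j
      exact hg1 j
  have hcard := Nat.card_eq_of_bijective _ hbij
  rw [Nat.card_prod] at hcard
  rw [hcard, card_placements ks hsum]

end Assembly

/-- The number of path subsets of partition type π contained in a fixed Hamiltonian
cycle `y` avoiding both endpoints of a fixed edge `{s,t}` of `y` equals
`(n-2-k)_{(m)} / ∏_j m_j!`. -/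
theorem count_path_subsets_in_cycle_avoiding_st (n k M : ℕ) (hM : 1 ≤ M)
    (ks : Fin M → ℕ) (hks : ∀ j, 1 ≤ ks j) (hsum : ∑ j, ks j = k) (hkM : k + M + 2 ≤ n)
    (y : Finset (Sym2 (Fin n))) (hy : isHamCycle n y)
    (s t : Fin n) (hst : s ≠ t) (hsty : s(s, t) ∈ y) :
    Nat.card {Γ : Finset (Sym2 (Fin n)) // Γ ⊆ y ∧ hasType n M ks Γ ∧
        ∀ e ∈ Γ, s ∉ e ∧ t ∉ e}
      * ∏ i ∈ Finset.range (k + 1),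
          Nat.factorial (Finset.univ.filter fun j => ks j = i).card
      = Nat.descFactorial (n - 2 - k) M := by
  classical
  obtain ⟨σ, hσ, hsupp, hyeq⟩ := hy
  have hkle : ∀ j, ks j ≤ k := by
    intro j
    rw [← hsum]
    exact Finset.single_le_sum (fun i _ => Nat.zero_le (ks i)) (Finset.mem_univ j)
  have hk1 : 1 ≤ k := le_trans (hks ⟨0, hM⟩) (hkle ⟨0, hM⟩)
  have hn : 4 ≤ n := by omega
  rw [← card_stab ks (fun j => by have := hkle j; omega)]
  have hedge : σ s = t ∨ σ t = s := by
    rw [hyeq, Finset.mem_image] at hsty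
    obtain ⟨i, -, hi⟩ := hsty
    rw [Sym2.eq_iff] at hi
    rcases hi with ⟨rfl, h2⟩ | ⟨h1, h2⟩
    · left; exact h2
    · right; rw [h1] at h2; exact h2
  rcases hedge with hσs | hσt
  · exact master ks hσ hsupp hn hσs hyeq hks hsum
  · have hσs' : σ⁻¹ s = t := by
      rw [← hσt]
      simp
    have hyeq' : y = Finset.image (fun i => s(i, σ⁻¹ i)) Finset.univ := by
      rw [hyeq]
      apply Finset.ext
      intro e
      rw [Finset.mem_image, Finset.mem_image]
      constructor
      · rintro ⟨i, -, rfl⟩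
        refine ⟨σ i, Finset.mem_univ _, ?_⟩
        rw [Equiv.Perm.inv_def, Equiv.symm_apply_apply]
        exact Sym2.eq_swap
      · rintro ⟨i, -, rfl⟩
        refine ⟨σ⁻¹ i, Finset.mem_univ _, ?_⟩
        rw [Equiv.Perm.inv_def, Equiv.apply_symm_apply]
        exact Sym2.eq_swap
    exact master ks hσ.inv (by rw [Equiv.Perm.support_inv]; exact hsupp) hn hσs' hyeq' hks hsum
end
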